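/- arXiv:2306.01172 — 15 statements merged into one kernel-verified Lean document; each statement's English description precedes it below -/
import Mathlib

section
/- (Uniqueness, part of Lemma 2.1) Assume G is injective and α = M ν⁻² F < 1. If u₁ ∈ V and u₂ ∈ V are both weak NSE solutions (i.e., ν ⟨G uᵢ, G v⟩ + b(uᵢ,uᵢ,v) = f(v) for all v ∈ V, i = 1, 2), then u₁ = u₂. -/
theorem nse_uniqueness
    {V W : Type*} [NormedAddCommGroup V] [InnerProductSpace ℝ V]
    [NormedAddCommGroup W] [InnerProductSpace ℝ W]
    (G : V →ₗ[ℝ] W) (b : V →ₗ[ℝ] V →ₗ[ℝ] V →ₗ[ℝ] ℝ) (f : V →ₗ[ℝ] ℝ)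
    (M F ν : ℝ) (hM : 0 < M) (hF : 0 ≤ F) (hν : 0 < ν)
    (hbskew : ∀ u v : V, b u v v = 0)
    (hb1 : ∀ u w v : V, |b u w v| ≤ M * Real.sqrt ‖u‖ * Real.sqrt ‖G u‖ * ‖G w‖ * ‖G v‖)
    (hb2 : ∀ u w v : V, |b u w v| ≤ M * ‖G u‖ * ‖G w‖ * ‖G v‖)
    (hb3 : ∀ u w v : V, |b u w v| ≤ M * ‖G u‖ * ‖G w‖ * Real.sqrt ‖v‖ * Real.sqrt ‖G v‖)
    (hf : ∀ v : V, |f v| ≤ F * ‖G v‖)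
    (hG : Function.Injective G) (hα : (M * F / ν ^ 2) < 1)
    (u₁ u₂ : V)
    (hu₁ : ∀ v : V, ν * (inner ℝ (G u₁) (G v) : ℝ) + b u₁ u₁ v = f v)
    (hu₂ : ∀ v : V, ν * (inner ℝ (G u₂) (G v) : ℝ) + b u₂ u₂ v = f v)
    : u₁ = u₂ := by
  set w := u₁ - u₂ with hw
  -- energy bound for u₁
  have e1 : ν * ‖G u₁‖ ^ 2 ≤ F * ‖G u₁‖ := by
    have h := hu₁ u₁
    rw [hbskew u₁ u₁] at h
    have hin : (inner ℝ (G u₁) (G u₁) : ℝ) = ‖G u₁‖ ^ 2 := real_inner_self_eq_norm_sq _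
    have hfb := hf u₁
    calc ν * ‖G u₁‖ ^ 2 = f u₁ := by rw [← hin]; linarith
      _ ≤ |f u₁| := le_abs_self _
      _ ≤ F * ‖G u₁‖ := hfb
  -- subtract equations, tested against w
  have key : ν * ‖G w‖ ^ 2 + b w u₁ w = 0 := by
    have h1 := hu₁ w
    have h2 := hu₂ w
    have hsub : b u₁ u₁ w - b u₂ u₂ w = b w u₁ w + b u₂ w w := by
      simp [hw, map_sub, LinearMap.sub_apply]
      ring
    have hin : (inner ℝ (G u₁) (G w) : ℝ) - inner ℝ (G u₂) (G w) = ‖G w‖ ^ 2 := by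
      rw [← inner_sub_left, ← map_sub, ← hw]
      exact real_inner_self_eq_norm_sq _
    rw [hbskew u₂ w] at hsub
    nlinarith [h1, h2, hsub, hin]
  have hbb : |b w u₁ w| ≤ M * ‖G w‖ * ‖G u₁‖ * ‖G w‖ := hb2 w u₁ w
  have hgw : ‖G w‖ = 0 := by
    by_contra h
    have hgw0 : 0 < ‖G w‖ := lt_of_le_of_ne (norm_nonneg _) (Ne.symm h)
    have hg1 : 0 ≤ ‖G u₁‖ := norm_nonneg _
    have h1 : ν * ‖G w‖ ^ 2 ≤ M * ‖G w‖ * ‖G u₁‖ * ‖G w‖ := by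
      nlinarith [neg_abs_le (b w u₁ w)]
    have h2 : ν ≤ M * ‖G u₁‖ :=
      le_of_mul_le_mul_right (by nlinarith : ν * (‖G w‖ * ‖G w‖) ≤ M * ‖G u₁‖ * (‖G w‖ * ‖G w‖))
        (mul_pos hgw0 hgw0)
    have h3 : 0 < ‖G u₁‖ := by nlinarith
    have h4 : ν * ‖G u₁‖ ≤ F := by nlinarith
    have : M * F / ν ^ 2 ≥ 1 := by
      rw [ge_iff_le, le_div_iff₀ (by positivity)]
      nlinarith
    linarith
  have : G w = 0 := norm_eq_zero.mp hgw
  have hG0 : G (u₁ - u₂) = 0 := by rw [← hw]; exact this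
  rw [map_sub, sub_eq_zero] at hG0
  exact hG hG0
end

section
/- (One-step Picard contraction, key estimate in Lemma 2.2) Let u ∈ V be a weak NSE solution and let u_{k+1} ∈ V be a Picard step from u_k ∈ V. Then ‖G(u − u_{k+1})‖ ≤ α ‖G(u − u_k)‖, where α = M ν⁻² F. -/
theorem picard_one_step_contraction
    {V W : Type*} [NormedAddCommGroup V] [InnerProductSpace ℝ V]
    [NormedAddCommGroup W] [InnerProductSpace ℝ W]
    (G : V →ₗ[ℝ] W) (b : V →ₗ[ℝ] V →ₗ[ℝ] V →ₗ[ℝ] ℝ) (f : V →ₗ[ℝ] ℝ)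
    (M F ν : ℝ) (hM : 0 < M) (hF : 0 ≤ F) (hν : 0 < ν)
    (hbskew : ∀ u v : V, b u v v = 0)
    (hb1 : ∀ u w v : V, |b u w v| ≤ M * Real.sqrt ‖u‖ * Real.sqrt ‖G u‖ * ‖G w‖ * ‖G v‖)
    (hb2 : ∀ u w v : V, |b u w v| ≤ M * ‖G u‖ * ‖G w‖ * ‖G v‖)
    (hb3 : ∀ u w v : V, |b u w v| ≤ M * ‖G u‖ * ‖G w‖ * Real.sqrt ‖v‖ * Real.sqrt ‖G v‖)
    (hf : ∀ v : V, |f v| ≤ F * ‖G v‖)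
    (u : V) (hu : ∀ v : V, ν * (inner ℝ (G u) (G v) : ℝ) + b u u v = f v)
    (uk uk1 : V)
    (hstep : ∀ v : V, ν * (inner ℝ (G uk1) (G v) : ℝ) + b uk uk1 v = f v)
    : ‖G (u - uk1)‖ ≤ (M * F / ν ^ 2) * ‖G (u - uk)‖ := by
  set e := u - uk1 with he
  set d := u - uk with hd
  -- Step 1: ν * ‖G u‖ ≤ F
  have hGu : ν * ‖G u‖ ≤ F := by
    have h1 := hu u
    rw [hbskew u u, add_zero] at h1
    have h2 : ν * ‖G u‖ ^ 2 ≤ F * ‖G u‖ := by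
      rw [← real_inner_self_eq_norm_sq]
      calc ν * (inner ℝ (G u) (G u) : ℝ) = f u := h1
        _ ≤ |f u| := le_abs_self _
        _ ≤ F * ‖G u‖ := hf u
    rcases eq_or_lt_of_le (norm_nonneg (G u)) with h0 | h0
    · rw [← h0, mul_zero]; exact hF
    · have := (mul_le_mul_iff_of_pos_right h0).mp (by nlinarith : ν * ‖G u‖ * ‖G u‖ ≤ F * ‖G u‖)
      exact this
  -- Step 2: error equation
  have hGe : (inner ℝ (G e) (G e) : ℝ) = (inner ℝ (G u) (G e) : ℝ) - (inner ℝ (G uk1) (G e) : ℝ) := by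
    rw [he, map_sub, inner_sub_left]
  have hb_split1 : b d u e = b u u e - b uk u e := by
    have hbd : b d = b u - b uk := by rw [hd, map_sub]
    rw [hbd, LinearMap.sub_apply, LinearMap.sub_apply]
  have hb_split2 : b uk e e = b uk u e - b uk uk1 e := by
    have hbe : (b uk) e = (b uk) u - (b uk) uk1 := by rw [he, map_sub]
    rw [hbe, LinearMap.sub_apply]
  have hz : b uk e e = 0 := hbskew uk e
  have hmul : ν * (inner ℝ (G e) (G e) : ℝ)
      = ν * (inner ℝ (G u) (G e) : ℝ) - ν * (inner ℝ (G uk1) (G e) : ℝ) := by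
    rw [hGe, mul_sub]
  have heq : ν * (inner ℝ (G e) (G e) : ℝ) = - b d u e := by
    have h1 := hu e
    have h2 := hstep e
    linarith
  have h3 : ν * ‖G e‖ ^ 2 ≤ M * ‖G d‖ * ‖G u‖ * ‖G e‖ := by
    rw [← real_inner_self_eq_norm_sq, heq]
    calc - b d u e ≤ |b d u e| := neg_le_abs _
      _ ≤ M * ‖G d‖ * ‖G u‖ * ‖G e‖ := hb2 d u e
  -- Conclude
  rcases eq_or_lt_of_le (norm_nonneg (G e)) with h0 | h0
  · rw [← h0]; positivity
  · rw [div_mul_eq_mul_div, le_div_iff₀ (pow_pos hν 2)]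
    have h4 : ν * ‖G e‖ ≤ M * ‖G d‖ * ‖G u‖ := by
      have := (mul_le_mul_iff_of_pos_right h0).mp (by nlinarith : ν * ‖G e‖ * ‖G e‖ ≤ M * ‖G d‖ * ‖G u‖ * ‖G e‖)
      exact this
    have hMd : 0 ≤ M * ‖G d‖ := by positivity
    nlinarith [mul_le_mul_of_nonneg_left hGu hMd, mul_le_mul_of_nonneg_left h4 hν.le]
end

section
/- (Global linear convergence of Picard, Lemma 2.2) Let u ∈ V be a weak NSE solution, assume α = M ν⁻² F < 1, and let (u_k)_{k≥0} be any sequence in V such that for every k, u_{k+1} is a Picard step from u_k. Then for every k, ‖G(u − u_k)‖ ≤ α^k ‖G(u − u_0)‖; in particular ‖G(u − u_k)‖ → 0 as k → ∞. -/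
theorem picard_global_convergence
    {V W : Type*} [NormedAddCommGroup V] [InnerProductSpace ℝ V]
    [NormedAddCommGroup W] [InnerProductSpace ℝ W]
    (G : V →ₗ[ℝ] W) (b : V →ₗ[ℝ] V →ₗ[ℝ] V →ₗ[ℝ] ℝ) (f : V →ₗ[ℝ] ℝ)
    (M F ν : ℝ) (hM : 0 < M) (hF : 0 ≤ F) (hν : 0 < ν)
    (hbskew : ∀ u v : V, b u v v = 0)
    (hb1 : ∀ u w v : V, |b u w v| ≤ M * Real.sqrt ‖u‖ * Real.sqrt ‖G u‖ * ‖G w‖ * ‖G v‖)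
    (hb2 : ∀ u w v : V, |b u w v| ≤ M * ‖G u‖ * ‖G w‖ * ‖G v‖)
    (hb3 : ∀ u w v : V, |b u w v| ≤ M * ‖G u‖ * ‖G w‖ * Real.sqrt ‖v‖ * Real.sqrt ‖G v‖)
    (hf : ∀ v : V, |f v| ≤ F * ‖G v‖)
    (u : V) (hu : ∀ v : V, ν * (inner ℝ (G u) (G v) : ℝ) + b u u v = f v)
    (hα : (M * F / ν ^ 2) < 1)
    (uk : ℕ → V)
    (hstep : ∀ k, ∀ v : V, ν * (inner ℝ (G (uk (k + 1))) (G v) : ℝ) + b (uk k) (uk (k + 1)) v = f v)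
    : (∀ k, ‖G (u - uk k)‖ ≤ (M * F / ν ^ 2) ^ k * ‖G (u - uk 0)‖) ∧
      Filter.Tendsto (fun k => ‖G (u - uk k)‖) Filter.atTop (nhds 0) := by
  set α : ℝ := M * F / ν ^ 2 with hαdef
  have hα0 : 0 ≤ α := by positivity
  -- bound on ‖G u‖
  have hGuF : ν * ‖G u‖ ≤ F := by
    have h1 := hu u
    rw [hbskew, real_inner_self_eq_norm_sq] at h1
    have h2 : ν * ‖G u‖ ^ 2 ≤ F * ‖G u‖ := by
      have := (abs_le.mp (hf u)).2
      linarith [this, h1]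
    rcases eq_or_lt_of_le (norm_nonneg (G u)) with h | h
    · rw [← h]; simpa using hF
    · nlinarith
  -- one-step contraction
  have hstep' : ∀ k, ‖G (u - uk (k + 1))‖ ≤ α * ‖G (u - uk k)‖ := by
    intro k
    have h1 := hu (u - uk (k + 1))
    have h2 := hstep k (u - uk (k + 1))
    have hin : (inner ℝ (G u) (G (u - uk (k+1))) : ℝ) - inner ℝ (G (uk (k+1))) (G (u - uk (k+1))) = ‖G (u - uk (k+1))‖ ^ 2 := by
      rw [← inner_sub_left, ← map_sub, real_inner_self_eq_norm_sq]
    have hdiff : ν * ‖G (u - uk (k+1))‖ ^ 2 = b (uk k) (uk (k+1)) (u - uk (k+1)) - b u u (u - uk (k+1)) := by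
      linear_combination h1 - h2 - ν * hin
    have hexp : b (uk k) (uk (k+1)) (u - uk (k+1)) - b u u (u - uk (k+1)) = - b (u - uk k) u (u - uk (k+1)) := by
      have h0 : b (uk k) (u - uk (k+1)) (u - uk (k+1)) = 0 := hbskew _ _
      simp only [map_sub, LinearMap.sub_apply] at h0 ⊢
      linarith
    have hb := hb2 (u - uk k) u (u - uk (k+1))
    have habs : ν * ‖G (u - uk (k+1))‖ ^ 2 ≤ M * ‖G (u - uk k)‖ * ‖G u‖ * ‖G (u - uk (k+1))‖ := by
      rw [hdiff, hexp]
      calc - b (u - uk k) u (u - uk (k+1)) ≤ |b (u - uk k) u (u - uk (k+1))| := neg_le_abs _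
        _ ≤ _ := hb
    rcases eq_or_lt_of_le (norm_nonneg (G (u - uk (k+1)))) with h | h
    · rw [← h]; positivity
    · rw [hαdef, div_mul_eq_mul_div, le_div_iff₀ (by positivity)]
      have hm1 := mul_le_mul_of_nonneg_right habs hν.le
      have hm2 := mul_le_mul_of_nonneg_left hGuF
        (by positivity : (0:ℝ) ≤ M * ‖G (u - uk k)‖ * ‖G (u - uk (k+1))‖)
      nlinarith [h, norm_nonneg (G (u - uk k)), hm1, hm2]
  -- geometric bound by induction
  have hgeo : ∀ k, ‖G (u - uk k)‖ ≤ α ^ k * ‖G (u - uk 0)‖ := by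
    intro k
    induction k with
    | zero => simp
    | succ n ih =>
      calc ‖G (u - uk (n+1))‖ ≤ α * ‖G (u - uk n)‖ := hstep' n
        _ ≤ α * (α ^ n * ‖G (u - uk 0)‖) := by
            exact mul_le_mul_of_nonneg_left ih hα0
        _ = α ^ (n+1) * ‖G (u - uk 0)‖ := by ring
  refine ⟨hgeo, ?_⟩
  have htend : Filter.Tendsto (fun k => α ^ k * ‖G (u - uk 0)‖) Filter.atTop (nhds 0) := by
    have := tendsto_pow_atTop_nhds_zero_of_lt_one hα0 hα
    simpa using this.mul_const ‖G (u - uk 0)‖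
  exact squeeze_zero (fun k => norm_nonneg _) hgeo htend
end

section
/- (One-step Newton stability, key step in the proof of Lemma 6.1) Assume 8α ≤ 1 where α = M ν⁻² F. If u_k ∈ V satisfies ‖G u_k‖ ≤ 2 ν⁻¹ F and u_{k+1} ∈ V is a Newton step from u_k, then ‖G u_{k+1}‖ ≤ 2 ν⁻¹ F. -/
set_option maxHeartbeats 1000000 in
theorem newton_one_step_stability
    {V W : Type*} [NormedAddCommGroup V] [InnerProductSpace ℝ V]
    [NormedAddCommGroup W] [InnerProductSpace ℝ W]
    (G : V →ₗ[ℝ] W) (b : V →ₗ[ℝ] V →ₗ[ℝ] V →ₗ[ℝ] ℝ) (f : V →ₗ[ℝ] ℝ)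
    (M F ν : ℝ) (hM : 0 < M) (hF : 0 ≤ F) (hν : 0 < ν)
    (hbskew : ∀ u v : V, b u v v = 0)
    (hb1 : ∀ u w v : V, |b u w v| ≤ M * Real.sqrt ‖u‖ * Real.sqrt ‖G u‖ * ‖G w‖ * ‖G v‖)
    (hb2 : ∀ u w v : V, |b u w v| ≤ M * ‖G u‖ * ‖G w‖ * ‖G v‖)
    (hb3 : ∀ u w v : V, |b u w v| ≤ M * ‖G u‖ * ‖G w‖ * Real.sqrt ‖v‖ * Real.sqrt ‖G v‖)
    (hf : ∀ v : V, |f v| ≤ F * ‖G v‖)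
    (hα : 8 * (M * F / ν ^ 2) ≤ 1)
    (uk uk1 : V) (hk : ‖G uk‖ ≤ 2 * ν⁻¹ * F)
    (hstep : ∀ v : V, ν * (inner ℝ (G uk1) (G v) : ℝ) + b uk uk1 v + b uk1 uk v
      = f v + b uk uk v)
    : ‖G uk1‖ ≤ 2 * ν⁻¹ * F := by
  set X := ‖G uk1‖ with hX
  set Y := ‖G uk‖ with hY
  have hX0 : 0 ≤ X := norm_nonneg _
  have hY0 : 0 ≤ Y := norm_nonneg _
  have h := hstep uk1
  rw [hbskew uk uk1] at h
  have hin : (inner ℝ (G uk1) (G uk1) : ℝ) = X ^ 2 := by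
    rw [real_inner_self_eq_norm_sq]
  rw [hin] at h
  have heq : ν * X ^ 2 = f uk1 + b uk uk uk1 - b uk1 uk uk1 := by linarith
  have h1 : f uk1 ≤ F * X := le_trans (le_abs_self _) (hf uk1)
  have h2 : b uk uk uk1 ≤ M * Y * Y * X := le_trans (le_abs_self _) (hb2 uk uk uk1)
  have h3 : -(b uk1 uk uk1) ≤ M * X * Y * X := le_trans (neg_le_abs _) (hb2 uk1 uk uk1)
  have key : ν * X ^ 2 ≤ F * X + M * Y * Y * X + M * X * Y * X := by linarith
  have hν2 : (0:ℝ) < ν ^ 2 := by positivity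
  have hα' : 8 * M * F ≤ ν ^ 2 := by
    have h2 : (M * F / ν ^ 2) * ν ^ 2 = M * F := div_mul_cancel₀ _ (ne_of_gt hν2)
    calc 8 * M * F = 8 * (M * F / ν ^ 2) * ν ^ 2 := by field_simp
    _ ≤ 1 * ν ^ 2 := mul_le_mul_of_nonneg_right hα hν2.le
    _ = ν ^ 2 := one_mul _
  by_contra hcon
  push_neg at hcon
  have hXpos : 0 < X := lt_of_le_of_lt (by positivity) hcon
  have hνX : ν * X > 2 * F := by
    calc ν * X > ν * (2 * ν⁻¹ * F) := by exact (mul_lt_mul_iff_right₀ hν).mpr hcon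
    _ = 2 * F := by field_simp
  -- from key divided by X: ν X ≤ F + M Y² + M Y X
  have key2 : ν * X ≤ F + M * Y * Y + M * Y * X := by
    have := mul_le_mul_of_nonneg_right key (le_of_lt (inv_pos.mpr hXpos))
    have hx : X * X⁻¹ = 1 := mul_inv_cancel₀ (ne_of_gt hXpos)
    nlinarith [key, hXpos, mul_pos hXpos hXpos]
  -- M Y ≤ ν/4, M Y² ≤ (ν/4) Y ≤ (ν/4)(2F/ν) = F/2
  have hMY : M * Y ≤ ν / 4 := by
    have : M * Y ≤ M * (2 * ν⁻¹ * F) := by nlinarith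
    have h2' : M * (2 * ν⁻¹ * F) ≤ ν / 4 := by
      have hq : 2 * M * F ≤ ν ^ 2 / 4 := by linarith
      calc M * (2 * ν⁻¹ * F) = 2 * M * F * ν⁻¹ := by ring
      _ ≤ ν ^ 2 / 4 * ν⁻¹ := mul_le_mul_of_nonneg_right hq (le_of_lt (inv_pos.mpr hν))
      _ = ν / 4 := by field_simp
    linarith
  have hMY2 : M * Y * Y ≤ F / 2 := by
    calc M * Y * Y ≤ ν / 4 * Y := mul_le_mul_of_nonneg_right hMY hY0
    _ ≤ ν / 4 * (2 * ν⁻¹ * F) := by nlinarith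
    _ = F / 2 := by field_simp; ring
  have hMYX : M * Y * X ≤ ν / 4 * X := mul_le_mul_of_nonneg_right hMY hX0
  -- ν X ≤ F + F/2 + ν/4 X  ⇒ 3ν/4 X ≤ 3F/2 ⇒ ν X ≤ 2F, contradiction
  nlinarith [key2, hMY2, hMYX, hνX]
end

section
/- (Stability of the Newton iteration, Lemma 6.1) Assume 8α ≤ 1 where α = M ν⁻² F, and let (u_k)_{k≥0} be a sequence in V with ‖G u_0‖ ≤ 2 ν⁻¹ F such that for every k, u_{k+1} is a Newton step from u_k. Then ‖G u_k‖ ≤ 2 ν⁻¹ F for every k. -/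
theorem newton_stability
    {V W : Type*} [NormedAddCommGroup V] [InnerProductSpace ℝ V]
    [NormedAddCommGroup W] [InnerProductSpace ℝ W]
    (G : V →ₗ[ℝ] W) (b : V →ₗ[ℝ] V →ₗ[ℝ] V →ₗ[ℝ] ℝ) (f : V →ₗ[ℝ] ℝ)
    (M F ν : ℝ) (hM : 0 < M) (hF : 0 ≤ F) (hν : 0 < ν)
    (hbskew : ∀ u v : V, b u v v = 0)
    (hb1 : ∀ u w v : V, |b u w v| ≤ M * Real.sqrt ‖u‖ * Real.sqrt ‖G u‖ * ‖G w‖ * ‖G v‖)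
    (hb2 : ∀ u w v : V, |b u w v| ≤ M * ‖G u‖ * ‖G w‖ * ‖G v‖)
    (hb3 : ∀ u w v : V, |b u w v| ≤ M * ‖G u‖ * ‖G w‖ * Real.sqrt ‖v‖ * Real.sqrt ‖G v‖)
    (hf : ∀ v : V, |f v| ≤ F * ‖G v‖)
    (hα : 8 * (M * F / ν ^ 2) ≤ 1)
    (uk : ℕ → V) (h0 : ‖G (uk 0)‖ ≤ 2 * ν⁻¹ * F)
    (hstep : ∀ k, ∀ v : V, ν * (inner ℝ (G (uk (k + 1))) (G v) : ℝ) + b (uk k) (uk (k + 1)) v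
      + b (uk (k + 1)) (uk k) v = f v + b (uk k) (uk k) v)
    : ∀ k, ‖G (uk k)‖ ≤ 2 * ν⁻¹ * F := by
  intro k
  induction k with
  | zero => exact h0
  | succ k ih =>
    set a := ‖G (uk k)‖ with ha
    set x := ‖G (uk (k + 1))‖ with hx
    have hx0 : 0 ≤ x := norm_nonneg _
    have ha0 : 0 ≤ a := norm_nonneg _
    have key := hstep k (uk (k + 1))
    rw [hbskew (uk k) (uk (k + 1))] at key
    have hinner : (inner ℝ (G (uk (k + 1))) (G (uk (k + 1))) : ℝ) = x ^ 2 := by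
      rw [real_inner_self_eq_norm_sq]
    rw [hinner] at key
    -- key : ν * x^2 + 0 + b u_{k+1} u_k u_{k+1} = f u_{k+1} + b u_k u_k u_{k+1}
    have hB1 : |b (uk (k+1)) (uk k) (uk (k+1))| ≤ M * x * a * x := hb2 _ _ _
    have hB2 : |b (uk k) (uk k) (uk (k+1))| ≤ M * a * a * x := hb2 _ _ _
    have hFb : |f (uk (k+1))| ≤ F * x := hf _
    have hineq : ν * x ^ 2 ≤ F * x + M * a * a * x + M * x * a * x := by
      have h1 : ν * x ^ 2 = f (uk (k+1)) + b (uk k) (uk k) (uk (k+1))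
          - b (uk (k+1)) (uk k) (uk (k+1)) := by linarith [key]
      have := abs_le.mp hB1
      have := abs_le.mp hB2
      have := abs_le.mp hFb
      linarith
    -- Now pure real arithmetic
    have hν2 : (0:ℝ) < ν ^ 2 := by positivity
    have hMF : 8 * M * F ≤ ν ^ 2 := by
      have h2 : 8 * (M * F / ν ^ 2) = (8 * M * F) / ν ^ 2 := by ring
      rw [h2, div_le_iff₀ hν2] at hα
      linarith
    have hinv : ν⁻¹ * ν = 1 := inv_mul_cancel₀ hν.ne'
    have haF : a * ν ≤ 2 * F := by nlinarith [ih]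
    rw [show (2 : ℝ) * ν⁻¹ * F = 2 * F / ν by field_simp]
    rw [le_div_iff₀ hν]
    by_contra hcon
    push_neg at hcon
    have hcon2 : 2 * F < x * ν := hcon
    have hxpos : 0 < x := by nlinarith
    nlinarith [mul_le_mul_of_nonneg_right hineq hν.le,
      mul_le_mul_of_nonneg_right haF (by positivity : (0:ℝ) ≤ M * a * x),
      mul_le_mul_of_nonneg_right haF (by positivity : (0:ℝ) ≤ M * x * x),
      mul_le_mul_of_nonneg_right hMF (by positivity : (0:ℝ) ≤ a * x),
      mul_le_mul_of_nonneg_right hMF (by positivity : (0:ℝ) ≤ x * x),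
      mul_le_mul_of_nonneg_right haF (by positivity : (0:ℝ) ≤ ν * x),
      mul_pos hxpos hν, mul_nonneg ha0 hx0]
end

section
/- (One-step quadratic error bound for Newton, key estimate in Lemma 2.3) Assume 8α ≤ 1 where α = M ν⁻² F, and set β = ν(1 − 2α). Let u ∈ V be a weak NSE solution, let u_k ∈ V satisfy ‖G u_k‖ ≤ 2 ν⁻¹ F, and let u_{k+1} ∈ V be a Newton step from u_k. Then ‖G(u − u_{k+1})‖ ≤ (M/β) ‖G(u − u_k)‖². -/
theorem newton_one_step_quadratic
    {V W : Type*} [NormedAddCommGroup V] [InnerProductSpace ℝ V]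
    [NormedAddCommGroup W] [InnerProductSpace ℝ W]
    (G : V →ₗ[ℝ] W) (b : V →ₗ[ℝ] V →ₗ[ℝ] V →ₗ[ℝ] ℝ) (f : V →ₗ[ℝ] ℝ)
    (M F ν : ℝ) (hM : 0 < M) (hF : 0 ≤ F) (hν : 0 < ν)
    (hbskew : ∀ u v : V, b u v v = 0)
    (hb1 : ∀ u w v : V, |b u w v| ≤ M * Real.sqrt ‖u‖ * Real.sqrt ‖G u‖ * ‖G w‖ * ‖G v‖)
    (hb2 : ∀ u w v : V, |b u w v| ≤ M * ‖G u‖ * ‖G w‖ * ‖G v‖)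
    (hb3 : ∀ u w v : V, |b u w v| ≤ M * ‖G u‖ * ‖G w‖ * Real.sqrt ‖v‖ * Real.sqrt ‖G v‖)
    (hf : ∀ v : V, |f v| ≤ F * ‖G v‖)
    (u : V) (hu : ∀ v : V, ν * (inner ℝ (G u) (G v) : ℝ) + b u u v = f v)
    (hα : 8 * (M * F / ν ^ 2) ≤ 1)
    (uk uk1 : V) (hk : ‖G uk‖ ≤ 2 * ν⁻¹ * F)
    (hstep : ∀ v : V, ν * (inner ℝ (G uk1) (G v) : ℝ) + b uk uk1 v + b uk1 uk v
      = f v + b uk uk v)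
    : ‖G (u - uk1)‖ ≤ (M / (ν * (1 - 2 * (M * F / ν ^ 2)))) * ‖G (u - uk)‖ ^ 2 := by
  have hβ : 0 < ν * (1 - 2 * (M * F / ν ^ 2)) := by nlinarith
  have key : ν * (inner ℝ (G (u - uk1)) (G (u - uk1)) : ℝ)
      = -(b (u - uk1) uk (u - uk1)) - b (u - uk) (u - uk) (u - uk1) := by
    have h1 := hu (u - uk1)
    have h2 := hstep (u - uk1)
    have hs1 := hbskew u (u - uk1)
    have hs2 := hbskew uk (u - uk1)
    have hs3 := hbskew uk1 (u - uk1)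
    simp only [map_sub, LinearMap.sub_apply, inner_sub_left, inner_sub_right] at h1 h2 hs1 hs2 hs3 ⊢
    linarith
  rw [real_inner_self_eq_norm_sq] at key
  set E := ‖G (u - uk1)‖ with hE
  set D := ‖G (u - uk)‖ with hD
  have hE0 : 0 ≤ E := norm_nonneg _
  have hD0 : 0 ≤ D := norm_nonneg _
  have b1 : |b (u - uk1) uk (u - uk1)| ≤ M * E * ‖G uk‖ * E := hb2 _ _ _
  have b2' : |b (u - uk) (u - uk) (u - uk1)| ≤ M * D * D * E := hb2 _ _ _
  have hbd1 : -(b (u - uk1) uk (u - uk1)) ≤ |b (u - uk1) uk (u - uk1)| := neg_le_abs _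
  have hbd2 : -(b (u - uk) (u - uk) (u - uk1)) ≤ |b (u - uk) (u - uk) (u - uk1)| := neg_le_abs _
  have hME : 0 ≤ M * E * E := by positivity
  have huk : M * E * ‖G uk‖ * E ≤ M * E * (2 * ν⁻¹ * F) * E := by nlinarith
  have main : ν * (1 - 2 * (M * F / ν ^ 2)) * E ^ 2 ≤ M * D ^ 2 * E := by
    have hν2 : ν ≠ 0 := ne_of_gt hν
    have : M * E * (2 * ν⁻¹ * F) * E = 2 * (M * F / ν ^ 2) * ν * E ^ 2 := by
      field_simp
    nlinarith
  rcases eq_or_lt_of_le hE0 with h0 | h0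
  · rw [← h0]; positivity
  · have : ν * (1 - 2 * (M * F / ν ^ 2)) * E ≤ M * D ^ 2 := by
      have := (mul_le_mul_iff_of_pos_right h0).mpr (le_refl E)
      nlinarith
    rw [div_mul_eq_mul_div, le_div_iff₀ hβ]
    nlinarith
end

section
/- (Quadratic convergence of Newton, Lemma 2.3) Assume 8α ≤ 1 where α = M ν⁻² F, and set β = ν(1 − 2α). Let u ∈ V be a weak NSE solution and let (u_k)_{k≥0} be a sequence in V with ‖G u_0‖ ≤ 2 ν⁻¹ F such that for every k, u_{k+1} is a Newton step from u_k. If the initial guess satisfies (M/β) ‖G(u − u_0)‖ < 1, then for every k, ‖G(u − u_{k+1})‖ ≤ (M/β) ‖G(u − u_k)‖², and ‖G(u − u_k)‖ → 0 as k → ∞. -/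
theorem newton_quadratic_convergence
    {V W : Type*} [NormedAddCommGroup V] [InnerProductSpace ℝ V]
    [NormedAddCommGroup W] [InnerProductSpace ℝ W]
    (G : V →ₗ[ℝ] W) (b : V →ₗ[ℝ] V →ₗ[ℝ] V →ₗ[ℝ] ℝ) (f : V →ₗ[ℝ] ℝ)
    (M F ν : ℝ) (hM : 0 < M) (hF : 0 ≤ F) (hν : 0 < ν)
    (hbskew : ∀ u v : V, b u v v = 0)
    (hb1 : ∀ u w v : V, |b u w v| ≤ M * Real.sqrt ‖u‖ * Real.sqrt ‖G u‖ * ‖G w‖ * ‖G v‖)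
    (hb2 : ∀ u w v : V, |b u w v| ≤ M * ‖G u‖ * ‖G w‖ * ‖G v‖)
    (hb3 : ∀ u w v : V, |b u w v| ≤ M * ‖G u‖ * ‖G w‖ * Real.sqrt ‖v‖ * Real.sqrt ‖G v‖)
    (hf : ∀ v : V, |f v| ≤ F * ‖G v‖)
    (u : V) (hu : ∀ v : V, ν * (inner ℝ (G u) (G v) : ℝ) + b u u v = f v)
    (hα : 8 * (M * F / ν ^ 2) ≤ 1)
    (uk : ℕ → V) (h0 : ‖G (uk 0)‖ ≤ 2 * ν⁻¹ * F)
    (hstep : ∀ k, ∀ v : V, ν * (inner ℝ (G (uk (k + 1))) (G v) : ℝ) + b (uk k) (uk (k + 1)) v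
      + b (uk (k + 1)) (uk k) v = f v + b (uk k) (uk k) v)
    (hinit : (M / (ν * (1 - 2 * (M * F / ν ^ 2)))) * ‖G (u - uk 0)‖ < 1)
    : (∀ k, ‖G (u - uk (k + 1))‖ ≤ (M / (ν * (1 - 2 * (M * F / ν ^ 2)))) * ‖G (u - uk k)‖ ^ 2) ∧
      Filter.Tendsto (fun k => ‖G (u - uk k)‖) Filter.atTop (nhds 0) := by
  have hν2 : (0:ℝ) < ν ^ 2 := by positivity
  have h8 : M * F / ν ^ 2 ≤ 1/8 := by linarith
  have hMF : M * F ≤ ν ^ 2 / 8 := by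
    rw [div_le_iff₀ hν2] at h8; linarith
  set β : ℝ := ν * (1 - 2 * (M * F / ν ^ 2)) with hβdef
  have hβν : β * ν = ν ^ 2 - 2 * M * F := by
    rw [hβdef]; have hq : M * F / ν ^ 2 * ν ^ 2 = M * F := div_mul_cancel₀ _ hν2.ne'; linear_combination (-2) * hq
  have hβpos : 0 < β := by
    have h1 : (0:ℝ) < 1 - 2 * (M * F / ν ^ 2) := by linarith
    exact mul_pos hν h1
  -- uniform bound: ν * ‖G (uk k)‖ ≤ 2 * F for all k
  have hbd : ∀ k, ν * ‖G (uk k)‖ ≤ 2 * F := by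
    intro k
    induction k with
    | zero =>
      have h1 : ν * ‖G (uk 0)‖ ≤ ν * (2 * ν⁻¹ * F) :=
        mul_le_mul_of_nonneg_left h0 hν.le
      have h2 : ν * (2 * ν⁻¹ * F) = 2 * F := by
        field_simp
      linarith
    | succ k ih =>
      set a := ‖G (uk (k+1))‖ with ha
      set c := ‖G (uk k)‖ with hc
      have ha0 : 0 ≤ a := norm_nonneg _
      have hc0 : 0 ≤ c := norm_nonneg _
      have h1 := hstep k (uk (k+1))
      rw [hbskew (uk k) (uk (k+1)), real_inner_self_eq_norm_sq] at h1
      have h2 : -(M * a * c * a) ≤ b (uk (k+1)) (uk k) (uk (k+1)) :=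
        neg_le_of_abs_le (hb2 _ _ _)
      have h3 : b (uk k) (uk k) (uk (k+1)) ≤ M * c * c * a :=
        le_trans (le_abs_self _) (hb2 _ _ _)
      have h4 : f (uk (k+1)) ≤ F * a := le_trans (le_abs_self _) (hf _)
      have key : ν * a ^ 2 ≤ F * a + M * c * c * a + M * a * c * a := by linarith
      have hMc : M * c ≤ ν / 4 := by
        have h7 : (M * c) * ν ≤ (ν / 4) * ν := by
          calc (M * c) * ν = M * (ν * c) := by ring
            _ ≤ M * (2 * F) := mul_le_mul_of_nonneg_left ih hM.le
            _ = 2 * (M * F) := by ring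
            _ ≤ 2 * (ν ^ 2 / 8) := by linarith
            _ = (ν / 4) * ν := by ring
        exact le_of_mul_le_mul_right h7 hν
      have hMc2 : M * c * c ≤ F / 2 := by
        calc M * c * c ≤ (ν / 4) * c := mul_le_mul_of_nonneg_right hMc hc0
          _ = (ν * c) / 4 := by ring
          _ ≤ (2 * F) / 4 := by linarith [ih]
          _ = F / 2 := by ring
      rcases eq_or_lt_of_le ha0 with h | h
      · rw [← h, mul_zero]; positivity
      · have hd : ν * a ≤ F + M * c * c + M * c * a := by
          have h' : (ν * a) * a ≤ (F + M * c * c + M * c * a) * a := by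
            calc (ν * a) * a = ν * a ^ 2 := by ring
              _ ≤ F * a + M * c * c * a + M * a * c * a := key
              _ = (F + M * c * c + M * c * a) * a := by ring
          exact le_of_mul_le_mul_right h' h
        have hMca : M * c * a ≤ (ν / 4) * a := mul_le_mul_of_nonneg_right hMc ha0
        linarith [hd, hMca, hMc2]
  -- main quadratic estimate
  have main : ∀ k, ‖G (u - uk (k + 1))‖ ≤ M / β * ‖G (u - uk k)‖ ^ 2 := by
    intro k
    set x := ‖G (u - uk (k+1))‖ with hx
    set y := ‖G (u - uk k)‖ with hy
    set c := ‖G (uk k)‖ with hc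
    have hx0 : 0 ≤ x := norm_nonneg _
    have hy0 : 0 ≤ y := norm_nonneg _
    have hc0 : 0 ≤ c := norm_nonneg _
    -- error equation
    have key : ν * x ^ 2 + b (u - uk k) (u - uk k) (u - uk (k+1))
        + b (u - uk (k+1)) (uk k) (u - uk (k+1)) = 0 := by
      have h1 := hu (u - uk (k+1))
      have h2 := hstep k (u - uk (k+1))
      have hz := hbskew (uk k) (u - uk (k+1))
      have hxe : x ^ 2 = (inner ℝ (G (u - uk (k+1))) (G (u - uk (k+1))) : ℝ) :=
        (real_inner_self_eq_norm_sq _).symm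
      rw [hxe]
      simp only [map_sub, LinearMap.sub_apply, inner_sub_left, inner_sub_right] at h1 h2 hz ⊢
      have hs : (inner ℝ (G (uk (k+1))) (G u) : ℝ) = inner ℝ (G u) (G (uk (k+1))) :=
        real_inner_comm _ _
      linarith [h1, h2, hz, hs]
    have h2 : -(M * y * y * x) ≤ b (u - uk k) (u - uk k) (u - uk (k+1)) :=
      neg_le_of_abs_le (hb2 _ _ _)
    have h3 : -(M * x * c * x) ≤ b (u - uk (k+1)) (uk k) (u - uk (k+1)) :=
      neg_le_of_abs_le (hb2 _ _ _)
    have keyineq : ν * x ^ 2 ≤ M * y * y * x + M * x * c * x := by linarith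
    have hbdk := hbd k
    rcases eq_or_lt_of_le hx0 with h | h
    · rw [← h]; positivity
    · rw [div_mul_eq_mul_div, le_div_iff₀ hβpos]
      -- goal : x * β ≤ M * y ^ 2
      have hA : ν * (ν * x ^ 2) ≤ ν * (M * y * y * x + M * x * c * x) :=
        mul_le_mul_of_nonneg_left keyineq hν.le
      have hB : (M * (ν * c)) * x ^ 2 ≤ (M * (2 * F)) * x ^ 2 :=
        mul_le_mul_of_nonneg_right (mul_le_mul_of_nonneg_left hbdk hM.le) (sq_nonneg x)
      have h5 : ((ν ^ 2 - 2 * M * F) * x) * x ≤ (M * ν * y ^ 2) * x := by linarith [hA, hB]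
      have h5' : (ν ^ 2 - 2 * M * F) * x ≤ M * ν * y ^ 2 := le_of_mul_le_mul_right h5 h
      have h6 : (x * β) * ν ≤ (M * y ^ 2) * ν := by
        calc (x * β) * ν = (ν ^ 2 - 2 * M * F) * x := by rw [mul_assoc, hβν]; ring
          _ ≤ M * ν * y ^ 2 := h5'
          _ = (M * y ^ 2) * ν := by ring
      exact le_of_mul_le_mul_right h6 hν
  refine ⟨main, ?_⟩
  -- geometric decay
  set C := ‖G (u - uk 0)‖ with hC
  set K := M / β with hK
  have hK0 : 0 ≤ K := by positivity
  have hC0 : 0 ≤ C := norm_nonneg _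
  set r := K * C with hr
  have hr0 : 0 ≤ r := mul_nonneg hK0 hC0
  have hr1 : r < 1 := hinit
  have hgeo : ∀ k, ‖G (u - uk k)‖ ≤ r ^ k * C := by
    intro k
    induction k with
    | zero => rw [pow_zero, one_mul]
    | succ k ih =>
      have hm := main k
      have hrk1 : r ^ k ≤ 1 := pow_le_one₀ hr0 hr1.le
      have hrk0 : 0 ≤ r ^ k := pow_nonneg hr0 k
      have hek0 : (0:ℝ) ≤ ‖G (u - uk k)‖ := norm_nonneg _
      calc ‖G (u - uk (k+1))‖ ≤ K * ‖G (u - uk k)‖ ^ 2 := hm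
        _ ≤ K * (r ^ k * C) ^ 2 := by
            apply mul_le_mul_of_nonneg_left _ hK0
            exact pow_le_pow_left₀ hek0 ih 2
        _ = (K * C) * (r ^ k * r ^ k) * C := by ring
        _ ≤ (K * C) * (r ^ k * 1) * C := by
            apply mul_le_mul_of_nonneg_right _ hC0
            apply mul_le_mul_of_nonneg_left _ hr0
            exact mul_le_mul_of_nonneg_left hrk1 hrk0
        _ = r ^ (k+1) * C := by rw [← hr]; ring
  have hlim : Filter.Tendsto (fun k => r ^ k * C) Filter.atTop (nhds 0) := by
    have := (tendsto_pow_atTop_nhds_zero_of_lt_one hr0 hr1).mul_const C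
    simpa using this
  exact squeeze_zero (fun k => norm_nonneg _) hgeo hlim
end

section
/- (CDA-Picard energy estimate, inequality (3.8) in the proof of Theorem 3.1) Let u ∈ V be a weak NSE solution, and let u_{k+1} ∈ V be a CDA-Picard step from u_k ∈ V. Write e_j = u − u_j. Then for every B > 0, ν ‖G e_{k+1}‖² + μ ‖I_H e_{k+1}‖² ≤ (ν/2) ‖G e_{k+1}‖² + B ν ‖G e_k‖² + (ν α⁴ / (16 B)) ‖e_k‖², where α = M ν⁻² F. -/
set_option maxHeartbeats 1000000 in

theorem cda_picard_energy_estimate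
    {V W : Type*} [NormedAddCommGroup V] [InnerProductSpace ℝ V]
    [NormedAddCommGroup W] [InnerProductSpace ℝ W]
    (G : V →ₗ[ℝ] W) (b : V →ₗ[ℝ] V →ₗ[ℝ] V →ₗ[ℝ] ℝ) (f : V →ₗ[ℝ] ℝ)
    (M F ν : ℝ) (hM : 0 < M) (hF : 0 ≤ F) (hν : 0 < ν)
    (hbskew : ∀ u v : V, b u v v = 0)
    (hb1 : ∀ u w v : V, |b u w v| ≤ M * Real.sqrt ‖u‖ * Real.sqrt ‖G u‖ * ‖G w‖ * ‖G v‖)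
    (hb2 : ∀ u w v : V, |b u w v| ≤ M * ‖G u‖ * ‖G w‖ * ‖G v‖)
    (hb3 : ∀ u w v : V, |b u w v| ≤ M * ‖G u‖ * ‖G w‖ * Real.sqrt ‖v‖ * Real.sqrt ‖G v‖)
    (hf : ∀ v : V, |f v| ≤ F * ‖G v‖)
    (IH : V →ₗ[ℝ] V) (CI H μ : ℝ) (hCI : 0 < CI) (hH : 0 < H) (hμ : 0 < μ)
    (hIH : ∀ v : V, ‖v - IH v‖ ≤ CI * H * ‖G v‖)
    (u : V) (hu : ∀ v : V, ν * (inner ℝ (G u) (G v) : ℝ) + b u u v = f v)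
    (uk uk1 : V)
    (hstep : ∀ v : V, ν * (inner ℝ (G uk1) (G v) : ℝ) + b uk uk1 v
      + μ * (inner ℝ (IH (uk1 - u)) (IH v) : ℝ) = f v)
    : ∀ B : ℝ, 0 < B →
      ν * ‖G (u - uk1)‖ ^ 2 + μ * ‖IH (u - uk1)‖ ^ 2 ≤
        (ν / 2) * ‖G (u - uk1)‖ ^ 2 + B * ν * ‖G (u - uk)‖ ^ 2
          + (ν * (M * F / ν ^ 2) ^ 4 / (16 * B)) * ‖u - uk‖ ^ 2 := by
  intro B hB
  -- energy identity
  have key : ν * ‖G (u - uk1)‖ ^ 2 + μ * ‖IH (u - uk1)‖ ^ 2 + b (u - uk) u (u - uk1) = 0 := by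
    have h1 := hu (u - uk1)
    have h2 := hstep (u - uk1)
    have hsk := hbskew uk (u - uk1)
    have e1 : ‖G (u - uk1)‖ ^ 2 = (inner ℝ (G (u-uk1)) (G (u-uk1)) : ℝ) :=
      (real_inner_self_eq_norm_sq _).symm
    have e2 : ‖IH (u - uk1)‖ ^ 2 = (inner ℝ (IH (u-uk1)) (IH (u-uk1)) : ℝ) :=
      (real_inner_self_eq_norm_sq _).symm
    rw [e1, e2]
    simp only [map_sub, inner_sub_left, inner_sub_right, LinearMap.sub_apply] at *
    linarith
  -- a priori bound on ‖G u‖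
  have hGu : ν * ‖G u‖ ≤ F := by
    have h1 := hu u
    rw [hbskew u u, real_inner_self_eq_norm_sq] at h1
    have h2 : ν * ‖G u‖ ^ 2 ≤ F * ‖G u‖ := by
      have := hf u
      linarith [le_abs_self (f u), h1]
    rcases eq_or_lt_of_le (norm_nonneg (G u)) with h | h
    · rw [← h]; simpa using hF
    · nlinarith
  set x := ‖G (u - uk1)‖ with hx
  set t := ‖IH (u - uk1)‖ with ht
  set y := ‖G (u - uk)‖ with hy
  set z := ‖u - uk‖ with hz
  set s := Real.sqrt z * Real.sqrt y with hs
  have hxn : 0 ≤ x := norm_nonneg _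
  have hyn : 0 ≤ y := norm_nonneg _
  have hzn : 0 ≤ z := norm_nonneg _
  have hsn : 0 ≤ s := mul_nonneg (Real.sqrt_nonneg _) (Real.sqrt_nonneg _)
  have hs2 : s ^ 2 = z * y := by
    rw [hs, mul_pow, Real.sq_sqrt hzn, Real.sq_sqrt hyn]
  -- bound the trilinear term
  have hb := hb1 (u - uk) u (u - uk1)
  have hbb : |b (u - uk) u (u - uk1)| ≤ M * s * (F / ν) * x := by
    have h1 : M * s * ‖G u‖ * x ≤ M * s * (F / ν) * x := by
      have hGu' : ‖G u‖ ≤ F / ν := by rw [le_div_iff₀ hν]; linarith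
      have : M * s * ‖G u‖ ≤ M * s * (F / ν) :=
        mul_le_mul_of_nonneg_left hGu' (mul_nonneg hM.le hsn)
      exact mul_le_mul_of_nonneg_right this hxn
    calc |b (u - uk) u (u - uk1)| ≤ M * Real.sqrt z * Real.sqrt y * ‖G u‖ * x := hb
      _ = M * s * ‖G u‖ * x := by rw [hs]; ring
      _ ≤ M * s * (F / ν) * x := h1
  -- so LHS ≤ M s (F/ν) x
  have hLHS : ν * x ^ 2 + μ * t ^ 2 ≤ M * s * (F / ν) * x := by
    have := neg_abs_le (b (u - uk) u (u - uk1))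
    linarith
  -- polynomial Young inequalities
  have poly : 16 * B * ν ^ 6 * (M * F * s * x) ≤
      8 * B * ν ^ 8 * x ^ 2 + 16 * B ^ 2 * ν ^ 8 * y ^ 2 + M ^ 4 * F ^ 4 * z ^ 2 := by
    have h1 : 2 * ν ^ 2 * (M * F * s * x) ≤ ν ^ 4 * x ^ 2 + M ^ 2 * F ^ 2 * s ^ 2 := by
      nlinarith [sq_nonneg (ν ^ 2 * x - M * F * s)]
    rw [hs2] at h1
    have h2 : 8 * B * ν ^ 4 * (M ^ 2 * F ^ 2 * (z * y)) ≤
        16 * B ^ 2 * ν ^ 8 * y ^ 2 + M ^ 4 * F ^ 4 * z ^ 2 := by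
      nlinarith [sq_nonneg (4 * B * ν ^ 4 * y - M ^ 2 * F ^ 2 * z)]
    have hc : (0:ℝ) ≤ 8 * B * ν ^ 4 := by positivity
    nlinarith [mul_le_mul_of_nonneg_left h1 hc]
  -- divide through
  have hdiv : M * s * (F / ν) * x ≤
      (ν / 2) * x ^ 2 + B * ν * y ^ 2 + (ν * (M * F / ν ^ 2) ^ 4 / (16 * B)) * z ^ 2 := by
    rw [← sub_nonneg]
    have heq : (ν / 2) * x ^ 2 + B * ν * y ^ 2 + (ν * (M * F / ν ^ 2) ^ 4 / (16 * B)) * z ^ 2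
        - M * s * (F / ν) * x =
        (8 * B * ν ^ 8 * x ^ 2 + 16 * B ^ 2 * ν ^ 8 * y ^ 2 + M ^ 4 * F ^ 4 * z ^ 2
          - 16 * B * ν ^ 6 * (M * F * s * x)) / (16 * B * ν ^ 7) := by
      field_simp
      ring
    rw [heq]
    apply div_nonneg (by linarith) (by positivity)
  linarith
end

section
/- (One-step contraction of CDA-Picard, Theorem 3.1) Let u ∈ V be a weak NSE solution, assume μ ≥ ν/(4 C_I² H²), and let u_{k+1} ∈ V be a CDA-Picard step from u_k ∈ V. Then ‖u − u_{k+1}‖_* ≤ √(2 C_I H) · α · ‖u − u_k‖_*, where α = M ν⁻² F and ‖v‖_* = (‖G v‖² + ‖v‖²/(2 C_I² H²))^(1/2). -/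
set_option maxHeartbeats 1000000 in
theorem cda_picard_one_step_contraction
    {V W : Type*} [NormedAddCommGroup V] [InnerProductSpace ℝ V]
    [NormedAddCommGroup W] [InnerProductSpace ℝ W]
    (G : V →ₗ[ℝ] W) (b : V →ₗ[ℝ] V →ₗ[ℝ] V →ₗ[ℝ] ℝ) (f : V →ₗ[ℝ] ℝ)
    (M F ν : ℝ) (hM : 0 < M) (hF : 0 ≤ F) (hν : 0 < ν)
    (hbskew : ∀ u v : V, b u v v = 0)
    (hb1 : ∀ u w v : V, |b u w v| ≤ M * Real.sqrt ‖u‖ * Real.sqrt ‖G u‖ * ‖G w‖ * ‖G v‖)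
    (hb2 : ∀ u w v : V, |b u w v| ≤ M * ‖G u‖ * ‖G w‖ * ‖G v‖)
    (hb3 : ∀ u w v : V, |b u w v| ≤ M * ‖G u‖ * ‖G w‖ * Real.sqrt ‖v‖ * Real.sqrt ‖G v‖)
    (hf : ∀ v : V, |f v| ≤ F * ‖G v‖)
    (IH : V →ₗ[ℝ] V) (CI H μ : ℝ) (hCI : 0 < CI) (hH : 0 < H) (hμ : 0 < μ)
    (hIH : ∀ v : V, ‖v - IH v‖ ≤ CI * H * ‖G v‖)
    (u : V) (hu : ∀ v : V, ν * (inner ℝ (G u) (G v) : ℝ) + b u u v = f v)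
    (hμ' : μ ≥ ν / (4 * CI ^ 2 * H ^ 2))
    (uk uk1 : V)
    (hstep : ∀ v : V, ν * (inner ℝ (G uk1) (G v) : ℝ) + b uk uk1 v
      + μ * (inner ℝ (IH (uk1 - u)) (IH v) : ℝ) = f v)
    : Real.sqrt (‖G (u - uk1)‖ ^ 2 + ‖u - uk1‖ ^ 2 / (2 * CI ^ 2 * H ^ 2)) ≤
      Real.sqrt (2 * CI * H) * (M * F / ν ^ 2) * Real.sqrt (‖G (u - uk)‖ ^ 2 + ‖u - uk‖ ^ 2 / (2 * CI ^ 2 * H ^ 2)) := by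
  set e := u - uk1 with he
  set ek := u - uk with hek
  set A := ‖G e‖ with hA
  set B := ‖IH e‖ with hB
  set N := ‖e‖ with hN
  set a := ‖ek‖ with ha
  set g := ‖G ek‖ with hg
  set U := ‖G u‖ with hU
  set sa := Real.sqrt a with hsa
  set sg := Real.sqrt g with hsg
  have hA0 : 0 ≤ A := norm_nonneg _
  have hB0 : 0 ≤ B := norm_nonneg _
  have hN0 : 0 ≤ N := norm_nonneg _
  have ha0 : 0 ≤ a := norm_nonneg _
  have hg0 : 0 ≤ g := norm_nonneg _
  have hU0 : 0 ≤ U := norm_nonneg _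
  have hsa0 : 0 ≤ sa := Real.sqrt_nonneg _
  have hsg0 : 0 ≤ sg := Real.sqrt_nonneg _
  have hsa2 : sa ^ 2 = a := Real.sq_sqrt ha0
  have hsg2 : sg ^ 2 = g := Real.sq_sqrt hg0
  -- key energy identity
  have h1 := hu e
  have h2 := hstep e
  have hGsub : (inner ℝ (G u) (G e) : ℝ) - inner ℝ (G uk1) (G e) = A ^ 2 := by
    rw [← inner_sub_left, show G u - G uk1 = G e from (map_sub G u uk1).symm]
    exact real_inner_self_eq_norm_sq _
  have hinn : (inner ℝ (IH (uk1 - u)) (IH e) : ℝ) = -(B ^ 2) := by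
    rw [show uk1 - u = -e from by rw [he]; exact (neg_sub u uk1).symm, map_neg,
      inner_neg_left, real_inner_self_eq_norm_sq]
  have hbsplit : b u u e - b uk uk1 e = b ek u e := by
    have h3 : b ek u e = b u u e - b uk u e := by
      have hb' : b ek = b u - b uk := by rw [hek, map_sub]
      rw [hb', LinearMap.sub_apply, LinearMap.sub_apply]
    have h4 : b uk e e = b uk u e - b uk uk1 e := by
      have hb'' : b uk e = b uk u - b uk uk1 := by rw [he, map_sub]
      rw [hb'', LinearMap.sub_apply]
    have h5 := hbskew uk e
    linarith
  have key : ν * A ^ 2 + μ * B ^ 2 = -(b ek u e) := by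
    linear_combination h1 - h2 - ν * hGsub + μ * hinn - hbsplit
  -- bound on ‖G u‖
  have hνU : ν * U ≤ F := by
    have hfu := hu u
    have hsk := hbskew u u
    have hguu : (inner ℝ (G u) (G u) : ℝ) = U ^ 2 := real_inner_self_eq_norm_sq _
    have hfb := hf u
    have hineq : ν * U ^ 2 ≤ F * U := by
      have : ν * U ^ 2 = f u := by rw [← hguu]; linarith
      calc ν * U ^ 2 = f u := this
        _ ≤ |f u| := le_abs_self _
        _ ≤ F * U := hfb
    rcases eq_or_lt_of_le hU0 with h | h
    · rw [← h]; simpa using hF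
    · exact (mul_le_mul_iff_of_pos_right h).mp (by linarith [hineq])
  -- F1
  have F1 : ν * A ^ 2 + μ * B ^ 2 ≤ M * sa * sg * U * A := by
    calc ν * A ^ 2 + μ * B ^ 2 = -(b ek u e) := key
      _ ≤ |b ek u e| := neg_le_abs _
      _ ≤ M * sa * sg * U * A := hb1 ek u e
  -- G1 : multiply by ν and use ν U ≤ F
  have G1 : ν ^ 2 * A ^ 2 + ν * μ * B ^ 2 ≤ M * F * sa * sg * A := by
    have hmul : (M * sa * sg * A) * (ν * U) ≤ (M * sa * sg * A) * F :=
      mul_le_mul_of_nonneg_left hνU (by positivity)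
    have hF1ν := mul_le_mul_of_nonneg_left F1 hν.le
    linarith [hF1ν, hmul]
  -- Young's inequality
  have hag : (sa * sg) ^ 2 = a * g := by rw [mul_pow, hsa2, hsg2]
  have G2 : ν ^ 4 * A ^ 2 + 2 * ν ^ 3 * μ * B ^ 2 ≤ M ^ 2 * F ^ 2 * (a * g) := by
    have hG1' := mul_le_mul_of_nonneg_left G1 (show (0:ℝ) ≤ 2 * ν ^ 2 by positivity)
    have hagMF : M ^ 2 * F ^ 2 * (sa * sg) ^ 2 = M ^ 2 * F ^ 2 * (a * g) := by rw [hag]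
    linarith [hG1', sq_nonneg (ν ^ 2 * A - M * F * (sa * sg)), hagMF]
  -- interpolation bound
  have F3 : N ≤ CI * H * A + B := by
    calc N = ‖(e - IH e) + IH e‖ := by rw [sub_add_cancel]
      _ ≤ ‖e - IH e‖ + ‖IH e‖ := norm_add_le _ _
      _ ≤ CI * H * A + B := by have := hIH e; simp only [← hA, ← hB]; linarith
  have G3 : N ^ 2 ≤ 2 * CI ^ 2 * H ^ 2 * A ^ 2 + 2 * B ^ 2 := by
    have hc0 : 0 ≤ CI * H * A + B := by positivity
    have hNN := mul_le_mul F3 F3 hN0 hc0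
    linarith [hNN, sq_nonneg (CI * H * A - B)]
  -- nudging condition
  have F4 : ν ≤ 4 * CI ^ 2 * H ^ 2 * μ := by
    rw [ge_iff_le, div_le_iff₀ (by positivity)] at hμ'
    linarith
  -- AM-GM
  have G4 : 4 * CI * H * (a * g) ≤ 4 * CI ^ 2 * H ^ 2 * g ^ 2 + a ^ 2 := by
    linarith [sq_nonneg (2 * CI * H * g - a)]
  -- cleared main inequality
  have P : 2 * CI ^ 2 * H ^ 2 * ν ^ 4 * A ^ 2 + ν ^ 4 * N ^ 2 ≤
      4 * CI ^ 3 * H ^ 3 * M ^ 2 * F ^ 2 * g ^ 2 + 2 * CI * H * M ^ 2 * F ^ 2 * a ^ 2 := by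
    have h1' : ν ^ 4 * N ^ 2 ≤ 2 * CI ^ 2 * H ^ 2 * ν ^ 4 * A ^ 2 + 2 * ν ^ 4 * B ^ 2 := by
      linarith [mul_le_mul_of_nonneg_left G3 (show (0:ℝ) ≤ ν ^ 4 by positivity)]
    have h2' : 2 * ν ^ 4 * B ^ 2 ≤ 8 * CI ^ 2 * H ^ 2 * μ * ν ^ 3 * B ^ 2 := by
      linarith [mul_le_mul_of_nonneg_left F4 (show (0:ℝ) ≤ 2 * ν ^ 3 * B ^ 2 by positivity)]
    have h3' : 4 * CI ^ 2 * H ^ 2 * (ν ^ 4 * A ^ 2 + 2 * ν ^ 3 * μ * B ^ 2) ≤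
        4 * CI ^ 2 * H ^ 2 * (M ^ 2 * F ^ 2 * (a * g)) :=
      mul_le_mul_of_nonneg_left G2 (by positivity)
    have h4' : CI * H * M ^ 2 * F ^ 2 * (4 * CI * H * (a * g)) ≤
        CI * H * M ^ 2 * F ^ 2 * (4 * CI ^ 2 * H ^ 2 * g ^ 2 + a ^ 2) :=
      mul_le_mul_of_nonneg_left G4 (by positivity)
    linarith [h1', h2', h3', h4',
      mul_nonneg (mul_nonneg (mul_nonneg (mul_nonneg hCI.le hH.le) (sq_nonneg M)) (sq_nonneg F)) (sq_nonneg a)]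
  -- divide through
  have main : A ^ 2 + N ^ 2 / (2 * CI ^ 2 * H ^ 2) ≤
      2 * CI * H * (M * F / ν ^ 2) ^ 2 * (g ^ 2 + a ^ 2 / (2 * CI ^ 2 * H ^ 2)) := by
    rw [← sub_nonneg]
    have expand : 2 * CI * H * (M * F / ν ^ 2) ^ 2 * (g ^ 2 + a ^ 2 / (2 * CI ^ 2 * H ^ 2))
        - (A ^ 2 + N ^ 2 / (2 * CI ^ 2 * H ^ 2))
        = (4 * CI ^ 3 * H ^ 3 * M ^ 2 * F ^ 2 * g ^ 2 + 2 * CI * H * M ^ 2 * F ^ 2 * a ^ 2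
            - (2 * CI ^ 2 * H ^ 2 * ν ^ 4 * A ^ 2 + ν ^ 4 * N ^ 2)) / (2 * CI ^ 2 * H ^ 2 * ν ^ 4) := by
      field_simp
      ring
    rw [expand]
    exact div_nonneg (by linarith) (by positivity)
  -- conclude with square roots
  have hα : 0 ≤ M * F / ν ^ 2 := by positivity
  calc Real.sqrt (A ^ 2 + N ^ 2 / (2 * CI ^ 2 * H ^ 2))
      ≤ Real.sqrt (2 * CI * H * (M * F / ν ^ 2) ^ 2 * (g ^ 2 + a ^ 2 / (2 * CI ^ 2 * H ^ 2))) :=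
        Real.sqrt_le_sqrt main
    _ = Real.sqrt (2 * CI * H) * (M * F / ν ^ 2) *
        Real.sqrt (g ^ 2 + a ^ 2 / (2 * CI ^ 2 * H ^ 2)) := by
        rw [Real.sqrt_mul (by positivity), Real.sqrt_mul (by positivity), Real.sqrt_sq hα]
end

section
/- (Global convergence of CDA-Picard, Theorem 3.1) Let u ∈ V be a weak NSE solution, assume 2 C_I H α² < 1 and μ ≥ ν/(4 C_I² H²), and let (u_k)_{k≥0} be any sequence in V such that for every k, u_{k+1} is a CDA-Picard step from u_k. Then for every k, ‖u − u_k‖_* ≤ (√(2 C_I H) α)^k ‖u − u_0‖_*; in particular ‖u − u_k‖_* → 0 as k → ∞, where α = M ν⁻² F and ‖v‖_* = (‖G v‖² + ‖v‖²/(2 C_I² H²))^(1/2). -/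
set_option maxHeartbeats 1600000 in
theorem cda_picard_global_convergence
    {V W : Type*} [NormedAddCommGroup V] [InnerProductSpace ℝ V]
    [NormedAddCommGroup W] [InnerProductSpace ℝ W]
    (G : V →ₗ[ℝ] W) (b : V →ₗ[ℝ] V →ₗ[ℝ] V →ₗ[ℝ] ℝ) (f : V →ₗ[ℝ] ℝ)
    (M F ν : ℝ) (hM : 0 < M) (hF : 0 ≤ F) (hν : 0 < ν)
    (hbskew : ∀ u v : V, b u v v = 0)
    (hb1 : ∀ u w v : V, |b u w v| ≤ M * Real.sqrt ‖u‖ * Real.sqrt ‖G u‖ * ‖G w‖ * ‖G v‖)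
    (hb2 : ∀ u w v : V, |b u w v| ≤ M * ‖G u‖ * ‖G w‖ * ‖G v‖)
    (hb3 : ∀ u w v : V, |b u w v| ≤ M * ‖G u‖ * ‖G w‖ * Real.sqrt ‖v‖ * Real.sqrt ‖G v‖)
    (hf : ∀ v : V, |f v| ≤ F * ‖G v‖)
    (IH : V →ₗ[ℝ] V) (CI H μ : ℝ) (hCI : 0 < CI) (hH : 0 < H) (hμ : 0 < μ)
    (hIH : ∀ v : V, ‖v - IH v‖ ≤ CI * H * ‖G v‖)
    (u : V) (hu : ∀ v : V, ν * (inner ℝ (G u) (G v) : ℝ) + b u u v = f v)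
    (hsmall : 2 * CI * H * (M * F / ν ^ 2) ^ 2 < 1)
    (hμ' : μ ≥ ν / (4 * CI ^ 2 * H ^ 2))
    (uk : ℕ → V)
    (hstep : ∀ k, ∀ v : V, ν * (inner ℝ (G (uk (k + 1))) (G v) : ℝ) + b (uk k) (uk (k + 1)) v
      + μ * (inner ℝ (IH (uk (k + 1) - u)) (IH v) : ℝ) = f v)
    : (∀ k, Real.sqrt (‖G (u - uk k)‖ ^ 2 + ‖u - uk k‖ ^ 2 / (2 * CI ^ 2 * H ^ 2)) ≤
        (Real.sqrt (2 * CI * H) * (M * F / ν ^ 2)) ^ k * Real.sqrt (‖G (u - uk 0)‖ ^ 2 + ‖u - uk 0‖ ^ 2 / (2 * CI ^ 2 * H ^ 2))) ∧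
      Filter.Tendsto (fun k => Real.sqrt (‖G (u - uk k)‖ ^ 2 + ‖u - uk k‖ ^ 2 / (2 * CI ^ 2 * H ^ 2))) Filter.atTop (nhds 0) := by
  -- a priori bound on ‖G u‖
  have hGu : ν * ‖G u‖ ≤ F := by
    have h := hu u
    rw [hbskew u u, real_inner_self_eq_norm_sq, add_zero] at h
    have h1 : ν * ‖G u‖ ^ 2 ≤ F * ‖G u‖ := by
      have := le_abs_self (f u)
      have := hf u
      linarith
    rcases eq_or_lt_of_le (norm_nonneg (G u)) with h0 | h0
    · rw [← h0]; simpa using hF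
    · exact (mul_le_mul_iff_of_pos_right h0).mp (by nlinarith : (ν * ‖G u‖) * ‖G u‖ ≤ F * ‖G u‖)
  have hGu' : ‖G u‖ ≤ F / ν := by rw [le_div_iff₀ hν]; linarith
  -- key one-step contraction
  have key : ∀ k, ‖G (u - uk (k+1))‖ ^ 2 + ‖u - uk (k+1)‖ ^ 2 / (2 * CI ^ 2 * H ^ 2) ≤
      (2 * CI * H * (M * F / ν ^ 2) ^ 2) *
        (‖G (u - uk k)‖ ^ 2 + ‖u - uk k‖ ^ 2 / (2 * CI ^ 2 * H ^ 2)) := by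
    intro k
    have herr : ν * (inner ℝ (G (u - uk (k+1))) (G (u - uk (k+1))) : ℝ)
        + b (u - uk k) u (u - uk (k+1))
        + μ * (inner ℝ (IH (u - uk (k+1))) (IH (u - uk (k+1))) : ℝ) = 0 := by
      have h1 := hu (u - uk (k+1))
      have h2 := hstep k (u - uk (k+1))
      have hskew := hbskew (uk k) (u - uk (k+1))
      simp only [map_sub, LinearMap.sub_apply, inner_sub_left, inner_sub_right] at h1 h2 hskew ⊢
      linarith [real_inner_comm (G u) (G (uk (k+1))), real_inner_comm (IH u) (IH (uk (k+1)))]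
    rw [real_inner_self_eq_norm_sq, real_inner_self_eq_norm_sq] at herr
    set e := u - uk (k+1) with he
    set d := u - uk k with hd
    have h3 : ν * ‖G e‖ ^ 2 + μ * ‖IH e‖ ^ 2 ≤
        M * Real.sqrt ‖d‖ * Real.sqrt ‖G d‖ * ‖G u‖ * ‖G e‖ := by
      have := neg_le_abs (b d u e)
      have := hb1 d u e
      linarith
    have hc : (0:ℝ) ≤ M * Real.sqrt ‖d‖ * Real.sqrt ‖G d‖ * ‖G e‖ := by positivity
    have h4 : ν * ‖G e‖ ^ 2 + μ * ‖IH e‖ ^ 2 ≤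
        (M * F / ν) * (Real.sqrt ‖d‖ * Real.sqrt ‖G d‖) * ‖G e‖ :=
      calc ν * ‖G e‖ ^ 2 + μ * ‖IH e‖ ^ 2
          ≤ M * Real.sqrt ‖d‖ * Real.sqrt ‖G d‖ * ‖G u‖ * ‖G e‖ := h3
        _ = (M * Real.sqrt ‖d‖ * Real.sqrt ‖G d‖ * ‖G e‖) * ‖G u‖ := by ring
        _ ≤ (M * Real.sqrt ‖d‖ * Real.sqrt ‖G d‖ * ‖G e‖) * (F / ν) :=
            mul_le_mul_of_nonneg_left hGu' hc
        _ = (M * F / ν) * (Real.sqrt ‖d‖ * Real.sqrt ‖G d‖) * ‖G e‖ := by ring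
    -- Young's inequality
    have hY : (M * F / ν) * (Real.sqrt ‖d‖ * Real.sqrt ‖G d‖) * ‖G e‖ ≤
        ν / 2 * ‖G e‖ ^ 2 + (M * F / ν) ^ 2 * (‖d‖ * ‖G d‖) / (2 * ν) := by
      have hc2 : ((M * F / ν) * (Real.sqrt ‖d‖ * Real.sqrt ‖G d‖)) ^ 2 =
          (M * F / ν) ^ 2 * (‖d‖ * ‖G d‖) := by
        rw [mul_pow, mul_pow, Real.sq_sqrt (norm_nonneg _), Real.sq_sqrt (norm_nonneg _)]
      set c := (M * F / ν) * (Real.sqrt ‖d‖ * Real.sqrt ‖G d‖) with hcdef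
      have hid : ν / 2 * ‖G e‖ ^ 2 + c ^ 2 / (2 * ν) - c * ‖G e‖ =
          (ν * ‖G e‖ - c) ^ 2 / (2 * ν) := by
        field_simp
        ring
      have hpos : (0:ℝ) ≤ (ν * ‖G e‖ - c) ^ 2 / (2 * ν) := by positivity
      rw [← hc2]
      linarith
    have h5 : ν / 2 * ‖G e‖ ^ 2 + μ * ‖IH e‖ ^ 2 ≤
        (M * F / ν) ^ 2 * (‖d‖ * ‖G d‖) / (2 * ν) := by linarith
    -- interpolation lower bound
    have htri : ‖e‖ ≤ CI * H * ‖G e‖ + ‖IH e‖ := by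
      calc ‖e‖ = ‖(e - IH e) + IH e‖ := by rw [sub_add_cancel]
        _ ≤ ‖e - IH e‖ + ‖IH e‖ := norm_add_le _ _
        _ ≤ CI * H * ‖G e‖ + ‖IH e‖ := by linarith [hIH e]
    have hs2 : ‖e‖ ^ 2 / 2 - CI ^ 2 * H ^ 2 * ‖G e‖ ^ 2 ≤ ‖IH e‖ ^ 2 := by
      nlinarith [mul_self_le_mul_self (norm_nonneg e) htri,
        sq_nonneg (CI * H * ‖G e‖ - ‖IH e‖), norm_nonneg (IH e), norm_nonneg (G e),
        mul_pos hCI hH]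
    have hμs : (ν / (4 * CI ^ 2 * H ^ 2)) * ‖IH e‖ ^ 2 ≤ μ * ‖IH e‖ ^ 2 :=
      mul_le_mul_of_nonneg_right hμ' (sq_nonneg _)
    have htcoef : (0:ℝ) < ν / (4 * CI ^ 2 * H ^ 2) := by positivity
    have h6 : ν / 4 * (‖G e‖ ^ 2 + ‖e‖ ^ 2 / (2 * CI ^ 2 * H ^ 2)) ≤
        (M * F / ν) ^ 2 * (‖d‖ * ‖G d‖) / (2 * ν) := by
      have hid2 : ν / 4 * (‖G e‖ ^ 2 + ‖e‖ ^ 2 / (2 * CI ^ 2 * H ^ 2)) =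
          ν / 2 * ‖G e‖ ^ 2 + (ν / (4 * CI ^ 2 * H ^ 2)) *
            (‖e‖ ^ 2 / 2 - CI ^ 2 * H ^ 2 * ‖G e‖ ^ 2) := by
        field_simp
        ring
      have hmono := mul_le_mul_of_nonneg_left hs2 htcoef.le
      linarith
    -- bound ‖d‖ * ‖G d‖ by the star norm squared
    have hdd : ‖d‖ * ‖G d‖ ≤ CI * H * (‖G d‖ ^ 2 + ‖d‖ ^ 2 / (2 * CI ^ 2 * H ^ 2)) := by
      have hid3 : CI * H * (‖G d‖ ^ 2 + ‖d‖ ^ 2 / (2 * CI ^ 2 * H ^ 2)) - ‖d‖ * ‖G d‖ =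
          ((CI * H * ‖G d‖ - ‖d‖) ^ 2 + CI ^ 2 * H ^ 2 * ‖G d‖ ^ 2) / (2 * CI * H) := by
        field_simp
        ring
      have : (0:ℝ) ≤ ((CI * H * ‖G d‖ - ‖d‖) ^ 2 + CI ^ 2 * H ^ 2 * ‖G d‖ ^ 2) / (2 * CI * H) := by
        positivity
      linarith
    have hcoef : (0:ℝ) ≤ (M * F / ν) ^ 2 / (2 * ν) := by positivity
    have h7 : ν / 4 * (‖G e‖ ^ 2 + ‖e‖ ^ 2 / (2 * CI ^ 2 * H ^ 2)) ≤
        (M * F / ν) ^ 2 / (2 * ν) * (CI * H * (‖G d‖ ^ 2 + ‖d‖ ^ 2 / (2 * CI ^ 2 * H ^ 2))) := by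
      have := mul_le_mul_of_nonneg_left hdd hcoef
      calc ν / 4 * (‖G e‖ ^ 2 + ‖e‖ ^ 2 / (2 * CI ^ 2 * H ^ 2))
          ≤ (M * F / ν) ^ 2 * (‖d‖ * ‖G d‖) / (2 * ν) := h6
        _ = (M * F / ν) ^ 2 / (2 * ν) * (‖d‖ * ‖G d‖) := by ring
        _ ≤ _ := this
    have hEq : (M * F / ν) ^ 2 / (2 * ν) *
        (CI * H * (‖G d‖ ^ 2 + ‖d‖ ^ 2 / (2 * CI ^ 2 * H ^ 2))) =
        ν / 4 * ((2 * CI * H * (M * F / ν ^ 2) ^ 2) *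
          (‖G d‖ ^ 2 + ‖d‖ ^ 2 / (2 * CI ^ 2 * H ^ 2))) := by
      field_simp
      ring
    rw [hEq] at h7
    exact le_of_mul_le_mul_left h7 (by positivity)
  -- iterate
  have hr0 : (0:ℝ) ≤ Real.sqrt (2 * CI * H) * (M * F / ν ^ 2) := by positivity
  have hr2 : (Real.sqrt (2 * CI * H) * (M * F / ν ^ 2)) ^ 2 =
      2 * CI * H * (M * F / ν ^ 2) ^ 2 := by
    rw [mul_pow, Real.sq_sqrt (by positivity)]
  set r := Real.sqrt (2 * CI * H) * (M * F / ν ^ 2) with hrdef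
  have main : ∀ k, Real.sqrt (‖G (u - uk k)‖ ^ 2 + ‖u - uk k‖ ^ 2 / (2 * CI ^ 2 * H ^ 2)) ≤
      r ^ k * Real.sqrt (‖G (u - uk 0)‖ ^ 2 + ‖u - uk 0‖ ^ 2 / (2 * CI ^ 2 * H ^ 2)) := by
    intro k
    induction k with
    | zero => simp
    | succ n ih =>
      have h1 : ‖G (u - uk (n+1))‖ ^ 2 + ‖u - uk (n+1)‖ ^ 2 / (2 * CI ^ 2 * H ^ 2) ≤
          r ^ 2 * (‖G (u - uk n)‖ ^ 2 + ‖u - uk n‖ ^ 2 / (2 * CI ^ 2 * H ^ 2)) := by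
        rw [hr2]; exact key n
      calc Real.sqrt (‖G (u - uk (n+1))‖ ^ 2 + ‖u - uk (n+1)‖ ^ 2 / (2 * CI ^ 2 * H ^ 2))
          ≤ Real.sqrt (r ^ 2 * (‖G (u - uk n)‖ ^ 2 + ‖u - uk n‖ ^ 2 / (2 * CI ^ 2 * H ^ 2))) :=
            Real.sqrt_le_sqrt h1
        _ = r * Real.sqrt (‖G (u - uk n)‖ ^ 2 + ‖u - uk n‖ ^ 2 / (2 * CI ^ 2 * H ^ 2)) := by
            rw [Real.sqrt_mul (sq_nonneg r), Real.sqrt_sq hr0]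
        _ ≤ r * (r ^ n * Real.sqrt (‖G (u - uk 0)‖ ^ 2 + ‖u - uk 0‖ ^ 2 / (2 * CI ^ 2 * H ^ 2))) :=
            mul_le_mul_of_nonneg_left ih hr0
        _ = r ^ (n+1) * Real.sqrt (‖G (u - uk 0)‖ ^ 2 + ‖u - uk 0‖ ^ 2 / (2 * CI ^ 2 * H ^ 2)) := by
            ring
  refine ⟨main, ?_⟩
  have hrlt : r < 1 := by nlinarith [hr2, hr0]
  have htend : Filter.Tendsto (fun k : ℕ => r ^ k *
      Real.sqrt (‖G (u - uk 0)‖ ^ 2 + ‖u - uk 0‖ ^ 2 / (2 * CI ^ 2 * H ^ 2)))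
      Filter.atTop (nhds 0) := by
    have := (tendsto_pow_atTop_nhds_zero_of_lt_one hr0 hrlt).mul_const
      (Real.sqrt (‖G (u - uk 0)‖ ^ 2 + ‖u - uk 0‖ ^ 2 / (2 * CI ^ 2 * H ^ 2)))
    simpa using this
  exact squeeze_zero (fun k => Real.sqrt_nonneg _) main htend
end

section
/- (CDA-Newton energy estimate, inequality (4.3) in the proof of Theorem 4.1) Assume 8α < 1 where α = M ν⁻² F, and set β = ν(1 − 2α). Let u ∈ V be a weak NSE solution, let u_k ∈ V satisfy ‖G u_k‖ ≤ 2 ν⁻¹ F, and let u_{k+1} ∈ V be a CDA-Newton step from u_k. Write e_j = u − u_j. Then for every A > 0, β ‖G e_{k+1}‖² + μ ‖I_H e_{k+1}‖² ≤ A ‖G e_k‖⁴ + (M²/(4A)) ‖G e_{k+1}‖ ‖e_{k+1}‖. -/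
theorem cda_newton_energy_estimate
    {V W : Type*} [NormedAddCommGroup V] [InnerProductSpace ℝ V]
    [NormedAddCommGroup W] [InnerProductSpace ℝ W]
    (G : V →ₗ[ℝ] W) (b : V →ₗ[ℝ] V →ₗ[ℝ] V →ₗ[ℝ] ℝ) (f : V →ₗ[ℝ] ℝ)
    (M F ν : ℝ) (hM : 0 < M) (hF : 0 ≤ F) (hν : 0 < ν)
    (hbskew : ∀ u v : V, b u v v = 0)
    (hb1 : ∀ u w v : V, |b u w v| ≤ M * Real.sqrt ‖u‖ * Real.sqrt ‖G u‖ * ‖G w‖ * ‖G v‖)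
    (hb2 : ∀ u w v : V, |b u w v| ≤ M * ‖G u‖ * ‖G w‖ * ‖G v‖)
    (hb3 : ∀ u w v : V, |b u w v| ≤ M * ‖G u‖ * ‖G w‖ * Real.sqrt ‖v‖ * Real.sqrt ‖G v‖)
    (hf : ∀ v : V, |f v| ≤ F * ‖G v‖)
    (IH : V →ₗ[ℝ] V) (CI H μ : ℝ) (hCI : 0 < CI) (hH : 0 < H) (hμ : 0 < μ)
    (hIH : ∀ v : V, ‖v - IH v‖ ≤ CI * H * ‖G v‖)
    (u : V) (hu : ∀ v : V, ν * (inner ℝ (G u) (G v) : ℝ) + b u u v = f v)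
    (hα : 8 * (M * F / ν ^ 2) < 1)
    (uk uk1 : V) (hk : ‖G uk‖ ≤ 2 * ν⁻¹ * F)
    (hstep : ∀ v : V, ν * (inner ℝ (G uk1) (G v) : ℝ) + b uk uk1 v + b uk1 uk v
      + μ * (inner ℝ (IH (uk1 - u)) (IH v) : ℝ) = f v + b uk uk v)
    : ∀ A : ℝ, 0 < A →
      (ν * (1 - 2 * (M * F / ν ^ 2))) * ‖G (u - uk1)‖ ^ 2 + μ * ‖IH (u - uk1)‖ ^ 2 ≤
        A * ‖G (u - uk)‖ ^ 4 + (M ^ 2 / (4 * A)) * ‖G (u - uk1)‖ * ‖u - uk1‖ := by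
  intro A hA
  set e := u - uk1 with he
  set ek := u - uk with hek
  -- key energy identity
  have key : ν * (inner ℝ (G e) (G e) : ℝ) + μ * (inner ℝ (IH e) (IH e) : ℝ)
      = -(b ek ek e) - (b e uk e) - (b uk e e) := by
    have P := hu e
    have Q := hstep e
    simp only [he, hek, map_sub, inner_sub_left, inner_sub_right,
      LinearMap.sub_apply] at P Q ⊢
    ring_nf at P Q ⊢
    linarith [P, Q]
  rw [real_inner_self_eq_norm_sq, real_inner_self_eq_norm_sq] at key
  have hskew : b uk e e = 0 := hbskew uk e
  have h1 : |b ek ek e| ≤ M * ‖G ek‖ * ‖G ek‖ * Real.sqrt ‖e‖ * Real.sqrt ‖G e‖ := hb3 ek ek e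
  have h2 : |b e uk e| ≤ M * ‖G e‖ * ‖G uk‖ * ‖G e‖ := hb2 e uk e
  have h2' : M * ‖G e‖ * ‖G uk‖ * ‖G e‖ ≤ 2 * (M * F / ν ^ 2) * ν * ‖G e‖ ^ 2 := by
    have h0 : (0:ℝ) ≤ M * ‖G e‖ * ‖G e‖ := by positivity
    have h1' : M * ‖G e‖ * ‖G uk‖ * ‖G e‖ ≤ M * ‖G e‖ * (2 * ν⁻¹ * F) * ‖G e‖ := by
      nlinarith [mul_nonneg h0 (sub_nonneg.mpr hk)]
    calc M * ‖G e‖ * ‖G uk‖ * ‖G e‖ ≤ M * ‖G e‖ * (2 * ν⁻¹ * F) * ‖G e‖ := h1'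
      _ = 2 * (M * F / ν ^ 2) * ν * ‖G e‖ ^ 2 := by field_simp
  -- Young's inequality step
  have hyoung : M * ‖G ek‖ * ‖G ek‖ * Real.sqrt ‖e‖ * Real.sqrt ‖G e‖
      ≤ A * ‖G ek‖ ^ 4 + (M ^ 2 / (4 * A)) * ‖G e‖ * ‖e‖ := by
    set s := Real.sqrt ‖e‖ with hs
    set t := Real.sqrt ‖G e‖ with ht
    have hs2 : s ^ 2 = ‖e‖ := Real.sq_sqrt (norm_nonneg _)
    have ht2 : t ^ 2 = ‖G e‖ := Real.sq_sqrt (norm_nonneg _)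
    rw [← hs2, ← ht2]
    have hid : A * ‖G ek‖ ^ 4 + (M ^ 2 / (4 * A)) * t ^ 2 * s ^ 2
        - M * ‖G ek‖ * ‖G ek‖ * s * t
        = (2 * A * ‖G ek‖ ^ 2 - M * s * t) ^ 2 / (4 * A) := by
      field_simp
      ring
    have hnn : (0:ℝ) ≤ (2 * A * ‖G ek‖ ^ 2 - M * s * t) ^ 2 / (4 * A) :=
      div_nonneg (sq_nonneg _) (by positivity)
    linarith
  have expand : (ν * (1 - 2 * (M * F / ν ^ 2))) * ‖G e‖ ^ 2
      = ν * ‖G e‖ ^ 2 - 2 * (M * F / ν ^ 2) * ν * ‖G e‖ ^ 2 := by ring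
  have e1 : -(b ek ek e) ≤ |b ek ek e| := neg_le_abs _
  have e2 : -(b e uk e) ≤ |b e uk e| := neg_le_abs _
  linarith [key, e1, e2, h1, h2, h2', hyoung]
end

section
/- (One-step quadratic error bound for CDA-Newton, key estimate in Theorem 4.1) Assume 8α < 1 where α = M ν⁻² F, set β = ν(1 − 2α), and assume μ ≥ β/(4 C_I² H²). Let u ∈ V be a weak NSE solution, let u_k ∈ V satisfy ‖G u_k‖ ≤ 2 ν⁻¹ F, and let u_{k+1} ∈ V be a CDA-Newton step from u_k. Then ‖G(u − u_{k+1})‖ ≤ (M √(2 C_I H) / β) ‖G(u − u_k)‖². -/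
lemma cda_alg_key (β μ c K X Y : ℝ) (hβ : 0 < β) (hc : 0 < c) (hμ0 : 0 < μ)
    (hμ : β / (4 * c ^ 2) ≤ μ) (hX : 0 ≤ X) (hY : 0 ≤ Y) (hK : 0 ≤ K)
    (hkey : β * X ^ 2 + μ * Y ^ 2 ≤ K * Real.sqrt X * Real.sqrt (c * X + Y)) :
    X ≤ K * Real.sqrt (2 * c) / β := by
  have hcXY : 0 ≤ c * X + Y := by positivity
  have hμ2 : β ≤ 4 * c ^ 2 * μ := by
    rw [div_le_iff₀ (by positivity)] at hμ; linarith [hμ]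
  have h1 : (β * X ^ 2 + μ * Y ^ 2) ^ 2 ≤ K ^ 2 * (X * (c * X + Y)) := by
    have hR : K * Real.sqrt X * Real.sqrt (c * X + Y) = K * Real.sqrt (X * (c * X + Y)) := by
      rw [Real.sqrt_mul hX]; ring
    rw [hR] at hkey
    calc (β * X ^ 2 + μ * Y ^ 2) ^ 2 ≤ (K * Real.sqrt (X * (c * X + Y))) ^ 2 := by
          apply pow_le_pow_left₀ (by positivity) hkey
      _ = K ^ 2 * (X * (c * X + Y)) := by
          rw [mul_pow, Real.sq_sqrt (by positivity)]
  have h2 : 4 * β * μ * (β ^ 2 * X ^ 4) ≤ 4 * β * μ * (c * K ^ 2 * X ^ 2) + K ^ 4 := by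
    nlinarith [sq_nonneg (2 * β * μ * X * Y - K ^ 2), mul_pos hβ hμ0,
      mul_le_mul_of_nonneg_left h1 (show (0:ℝ) ≤ 4 * β * μ by positivity),
      mul_nonneg (mul_nonneg hβ.le hμ0.le) (mul_nonneg hμ0.le (mul_nonneg hμ0.le (pow_nonneg hY 4))), sq_nonneg (β * μ * X * Y)]
  have hZ : (β * X) ^ 2 ≤ 2 * c * K ^ 2 := by
    by_contra hcon
    push_neg at hcon
    have hX0 : 0 < X := by
      rcases hX.lt_or_eq with h | h
      · exact h
      · rw [← h] at hcon
        simp at hcon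
        nlinarith [mul_nonneg hc.le (sq_nonneg K)]
    have e1 : 4 * β * μ * X ^ 2 * (2 * c * K ^ 2) < 4 * β * μ * X ^ 2 * (β * X) ^ 2 :=
      mul_lt_mul_of_pos_left hcon (by positivity)
    have e2 : 4 * β * μ * (c * K ^ 2 * X ^ 2) < K ^ 4 := by nlinarith
    have e2' : β * (4 * β * μ * (c * K ^ 2 * X ^ 2)) < β * K ^ 4 :=
      mul_lt_mul_of_pos_left e2 hβ
    have e3' : 2 * β * K ^ 4 ≤ β * (4 * β * μ * (c * K ^ 2 * X ^ 2)) := by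
      nlinarith [mul_le_mul_of_nonneg_left hcon.le (show (0:ℝ) ≤ 4 * μ * c * K ^ 2 by positivity),
        mul_le_mul_of_nonneg_right hμ2 (show (0:ℝ) ≤ 2 * K ^ 4 by positivity)]
    nlinarith [mul_nonneg hβ.le (pow_nonneg hK 4)]
  have h4 : β * X ≤ K * Real.sqrt (2 * c) := by
    have h5 : β * X = Real.sqrt ((β * X) ^ 2) := (Real.sqrt_sq (by positivity)).symm
    rw [h5]
    calc Real.sqrt ((β * X) ^ 2) ≤ Real.sqrt (2 * c * K ^ 2) := Real.sqrt_le_sqrt hZ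
      _ = Real.sqrt (2 * c) * Real.sqrt (K ^ 2) := Real.sqrt_mul (by positivity) _
      _ = K * Real.sqrt (2 * c) := by rw [Real.sqrt_sq hK]; ring
  rw [le_div_iff₀ hβ]; linarith

theorem cda_newton_one_step_quadratic
    {V W : Type*} [NormedAddCommGroup V] [InnerProductSpace ℝ V]
    [NormedAddCommGroup W] [InnerProductSpace ℝ W]
    (G : V →ₗ[ℝ] W) (b : V →ₗ[ℝ] V →ₗ[ℝ] V →ₗ[ℝ] ℝ) (f : V →ₗ[ℝ] ℝ)
    (M F ν : ℝ) (hM : 0 < M) (hF : 0 ≤ F) (hν : 0 < ν)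
    (hbskew : ∀ u v : V, b u v v = 0)
    (hb1 : ∀ u w v : V, |b u w v| ≤ M * Real.sqrt ‖u‖ * Real.sqrt ‖G u‖ * ‖G w‖ * ‖G v‖)
    (hb2 : ∀ u w v : V, |b u w v| ≤ M * ‖G u‖ * ‖G w‖ * ‖G v‖)
    (hb3 : ∀ u w v : V, |b u w v| ≤ M * ‖G u‖ * ‖G w‖ * Real.sqrt ‖v‖ * Real.sqrt ‖G v‖)
    (hf : ∀ v : V, |f v| ≤ F * ‖G v‖)
    (IH : V →ₗ[ℝ] V) (CI H μ : ℝ) (hCI : 0 < CI) (hH : 0 < H) (hμ : 0 < μ)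
    (hIH : ∀ v : V, ‖v - IH v‖ ≤ CI * H * ‖G v‖)
    (u : V) (hu : ∀ v : V, ν * (inner ℝ (G u) (G v) : ℝ) + b u u v = f v)
    (hα : 8 * (M * F / ν ^ 2) < 1)
    (hμ' : μ ≥ (ν * (1 - 2 * (M * F / ν ^ 2))) / (4 * CI ^ 2 * H ^ 2))
    (uk uk1 : V) (hk : ‖G uk‖ ≤ 2 * ν⁻¹ * F)
    (hstep : ∀ v : V, ν * (inner ℝ (G uk1) (G v) : ℝ) + b uk uk1 v + b uk1 uk v
      + μ * (inner ℝ (IH (uk1 - u)) (IH v) : ℝ) = f v + b uk uk v)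
    : ‖G (u - uk1)‖ ≤ (M * Real.sqrt (2 * CI * H) / (ν * (1 - 2 * (M * F / ν ^ 2)))) * ‖G (u - uk)‖ ^ 2 := by
  set e : V := u - uk1 with he
  set d : V := u - uk with hd
  set X : ℝ := ‖G e‖ with hX
  set Y : ℝ := ‖IH e‖ with hY
  have hα0 : 0 ≤ M * F / ν ^ 2 := by positivity
  have hβ : 0 < ν * (1 - 2 * (M * F / ν ^ 2)) := by nlinarith
  -- error equation
  have hEeq : ν * X ^ 2 + μ * Y ^ 2 = -(b d d e) - b e uk e := by
    have h1 := hu e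
    have h2 := hstep e
    have hg : (inner ℝ (G u) (G e) : ℝ) - (inner ℝ (G uk1) (G e) : ℝ) = X ^ 2 := by
      rw [← inner_sub_left, ← map_sub, ← he, hX, real_inner_self_eq_norm_sq]
    have hi : (inner ℝ (IH (uk1 - u)) (IH e) : ℝ) = -(Y ^ 2) := by
      have : uk1 - u = -e := by rw [he]; abel
      rw [this, map_neg, inner_neg_left, hY, real_inner_self_eq_norm_sq]
    have hident : b u u e - b uk uk1 e - b uk1 uk e + b uk uk e
        = b d d e + b uk e e + b e uk e := by
      have h3 : uk1 = u - e := by rw [he]; abel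
      have h4 : uk = u - d := by rw [hd]; abel
      rw [h3, h4]
      simp only [map_sub, LinearMap.sub_apply]
      ring
    have hsk : b uk e e = 0 := hbskew uk e
    linear_combination h1 - h2 - ν * hg + μ * hi - hident - hsk
  set K : ℝ := M * ‖G d‖ ^ 2 with hKdef
  have hK0 : 0 ≤ K := by positivity
  have hX0 : (0:ℝ) ≤ X := norm_nonneg _
  have hY0 : (0:ℝ) ≤ Y := norm_nonneg _
  -- key inequality
  have hkey1 : ν * X ^ 2 + μ * Y ^ 2
      ≤ K * Real.sqrt ‖e‖ * Real.sqrt X + M * (2 * ν⁻¹ * F) * X ^ 2 := by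
    have hbd := hb3 d d e
    have hbe := hb2 e uk e
    have h5 : M * ‖G e‖ * ‖G uk‖ * ‖G e‖ ≤ M * (2 * ν⁻¹ * F) * X ^ 2 := by
      rw [← hX]
      have h51 : M * X ^ 2 * ‖G uk‖ ≤ M * X ^ 2 * (2 * ν⁻¹ * F) :=
        mul_le_mul_of_nonneg_left hk (by positivity)
      nlinarith [h51]
    have h6 : -(b d d e) - b e uk e ≤ |b d d e| + |b e uk e| := by
      have := abs_nonneg (b d d e)
      have := neg_abs_le (b d d e)
      have := neg_abs_le (b e uk e)
      linarith
    have h7 : |b d d e| ≤ K * Real.sqrt ‖e‖ * Real.sqrt X := by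
      calc |b d d e| ≤ M * ‖G d‖ * ‖G d‖ * Real.sqrt ‖e‖ * Real.sqrt ‖G e‖ := hbd
        _ = K * Real.sqrt ‖e‖ * Real.sqrt X := by rw [hKdef, hX]; ring
    rw [hEeq]
    calc -(b d d e) - b e uk e ≤ |b d d e| + |b e uk e| := h6
      _ ≤ K * Real.sqrt ‖e‖ * Real.sqrt X + M * (2 * ν⁻¹ * F) * X ^ 2 :=
        add_le_add h7 (le_trans hbe h5)
  have hνF : M * (2 * ν⁻¹ * F) = ν - ν * (1 - 2 * (M * F / ν ^ 2)) := by
    field_simp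
    ring
  have hkey2 : ν * (1 - 2 * (M * F / ν ^ 2)) * X ^ 2 + μ * Y ^ 2
      ≤ K * Real.sqrt ‖e‖ * Real.sqrt X := by
    have h8 : M * (2 * ν⁻¹ * F) * X ^ 2
        = ν * X ^ 2 - ν * (1 - 2 * (M * F / ν ^ 2)) * X ^ 2 := by
      field_simp
      ring
    linarith [hkey1, h8]
  have henorm : ‖e‖ ≤ CI * H * X + Y := by
    calc ‖e‖ = ‖(e - IH e) + IH e‖ := by rw [sub_add_cancel]
      _ ≤ ‖e - IH e‖ + ‖IH e‖ := norm_add_le _ _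
      _ ≤ CI * H * X + Y := by
        have := hIH e
        rw [← hX] at this
        linarith
  have hkey : ν * (1 - 2 * (M * F / ν ^ 2)) * X ^ 2 + μ * Y ^ 2
      ≤ K * Real.sqrt X * Real.sqrt (CI * H * X + Y) := by
    calc ν * (1 - 2 * (M * F / ν ^ 2)) * X ^ 2 + μ * Y ^ 2
        ≤ K * Real.sqrt ‖e‖ * Real.sqrt X := hkey2
      _ ≤ K * Real.sqrt (CI * H * X + Y) * Real.sqrt X := by
        apply mul_le_mul_of_nonneg_right _ (Real.sqrt_nonneg _)
        exact mul_le_mul_of_nonneg_left (Real.sqrt_le_sqrt henorm) hK0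
      _ = K * Real.sqrt X * Real.sqrt (CI * H * X + Y) := by ring
  have hμ'' : ν * (1 - 2 * (M * F / ν ^ 2)) / (4 * (CI * H) ^ 2) ≤ μ := by
    rw [mul_pow]
    calc ν * (1 - 2 * (M * F / ν ^ 2)) / (4 * (CI ^ 2 * H ^ 2))
        = ν * (1 - 2 * (M * F / ν ^ 2)) / (4 * CI ^ 2 * H ^ 2) := by ring_nf
      _ ≤ μ := hμ'
  have hfinal := cda_alg_key (ν * (1 - 2 * (M * F / ν ^ 2))) μ (CI * H) K X Y
    hβ (by positivity) hμ hμ'' hX0 hY0 hK0 hkey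
  calc X ≤ K * Real.sqrt (2 * (CI * H)) / (ν * (1 - 2 * (M * F / ν ^ 2))) := hfinal
    _ = M * Real.sqrt (2 * CI * H) / (ν * (1 - 2 * (M * F / ν ^ 2))) * ‖G d‖ ^ 2 := by
      rw [← mul_assoc]
      ring
end

section
/- (Quadratic convergence of CDA-Newton, Theorem 4.1) Assume 8α < 1 where α = M ν⁻² F, set β = ν(1 − 2α), and assume μ ≥ β/(4 C_I² H²). Let u ∈ V be a weak NSE solution and let (u_k)_{k≥0} be a sequence in V such that for every k, u_{k+1} is a CDA-Newton step from u_k, and such that the iterates are stable: ‖G u_k‖ ≤ 2 ν⁻¹ F for every k. If the initial guess satisfies (M √(2 C_I H)/β) ‖G(u − u_0)‖ < 1, then for every k, ‖G(u − u_{k+1})‖ ≤ (M √(2 C_I H)/β) ‖G(u − u_k)‖², and ‖G(u − u_k)‖ → 0 as k → ∞. -/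
lemma aux_quad (g j S : ℝ) (hg : 0 ≤ g) (hj : 0 ≤ j) (hS : 0 ≤ S)
    (h : g ^ 2 + j ^ 2 / 4 ≤ S * Real.sqrt g * Real.sqrt (g + j)) :
    g ≤ Real.sqrt 2 * S := by
  rcases hg.eq_or_lt with h0 | h0
  · rw [← h0]; positivity
  · have hgj : 0 < g + j := by linarith
    have hsg : 0 < Real.sqrt g := Real.sqrt_pos.mpr h0
    have hsgj : 0 < Real.sqrt (g + j) := Real.sqrt_pos.mpr hgj
    have h2 : (0:ℝ) < Real.sqrt 2 := by positivity
    have hA : (g / Real.sqrt 2) * Real.sqrt g * Real.sqrt (g + j) ≤ g ^ 2 + j ^ 2 / 4 := by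
      set A := (g / Real.sqrt 2) * Real.sqrt g * Real.sqrt (g + j) with hAdef
      have hAnn : 0 ≤ A := by positivity
      have e1 : Real.sqrt g ^ 2 = g := Real.sq_sqrt h0.le
      have e2 : Real.sqrt (g + j) ^ 2 = g + j := Real.sq_sqrt hgj.le
      have e3 : Real.sqrt 2 ^ 2 = 2 := Real.sq_sqrt (by norm_num)
      have hA2 : A ^ 2 = g ^ 3 * (g + j) / 2 := by
        rw [hAdef, mul_pow, mul_pow, div_pow, e1, e2, e3]; ring
      have hB2 : A ^ 2 ≤ (g ^ 2 + j ^ 2 / 4) ^ 2 := by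
        rw [hA2]
        nlinarith [sq_nonneg (g ^ 2 - g * j), mul_nonneg (pow_nonneg h0.le 3) hj,
          sq_nonneg (j ^ 2), sq_nonneg (g * j)]
      calc A = Real.sqrt (A ^ 2) := (Real.sqrt_sq hAnn).symm
        _ ≤ Real.sqrt ((g ^ 2 + j ^ 2 / 4) ^ 2) := Real.sqrt_le_sqrt hB2
        _ = g ^ 2 + j ^ 2 / 4 := Real.sqrt_sq (by positivity)
    have hdiv : g / Real.sqrt 2 ≤ S := by
      have h' := hA.trans h
      exact le_of_mul_le_mul_right (le_of_mul_le_mul_right h' hsgj) hsg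
    calc g = (g / Real.sqrt 2) * Real.sqrt 2 := by field_simp
      _ ≤ S * Real.sqrt 2 := mul_le_mul_of_nonneg_right hdiv h2.le
      _ = Real.sqrt 2 * S := mul_comm _ _

theorem cda_newton_quadratic_convergence
    {V W : Type*} [NormedAddCommGroup V] [InnerProductSpace ℝ V]
    [NormedAddCommGroup W] [InnerProductSpace ℝ W]
    (G : V →ₗ[ℝ] W) (b : V →ₗ[ℝ] V →ₗ[ℝ] V →ₗ[ℝ] ℝ) (f : V →ₗ[ℝ] ℝ)
    (M F ν : ℝ) (hM : 0 < M) (hF : 0 ≤ F) (hν : 0 < ν)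
    (hbskew : ∀ u v : V, b u v v = 0)
    (hb1 : ∀ u w v : V, |b u w v| ≤ M * Real.sqrt ‖u‖ * Real.sqrt ‖G u‖ * ‖G w‖ * ‖G v‖)
    (hb2 : ∀ u w v : V, |b u w v| ≤ M * ‖G u‖ * ‖G w‖ * ‖G v‖)
    (hb3 : ∀ u w v : V, |b u w v| ≤ M * ‖G u‖ * ‖G w‖ * Real.sqrt ‖v‖ * Real.sqrt ‖G v‖)
    (hf : ∀ v : V, |f v| ≤ F * ‖G v‖)
    (IH : V →ₗ[ℝ] V) (CI H μ : ℝ) (hCI : 0 < CI) (hH : 0 < H) (hμ : 0 < μ)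
    (hIH : ∀ v : V, ‖v - IH v‖ ≤ CI * H * ‖G v‖)
    (u : V) (hu : ∀ v : V, ν * (inner ℝ (G u) (G v) : ℝ) + b u u v = f v)
    (hα : 8 * (M * F / ν ^ 2) < 1)
    (hμ' : μ ≥ (ν * (1 - 2 * (M * F / ν ^ 2))) / (4 * CI ^ 2 * H ^ 2))
    (uk : ℕ → V)
    (hstep : ∀ k, ∀ v : V, ν * (inner ℝ (G (uk (k + 1))) (G v) : ℝ) + b (uk k) (uk (k + 1)) v
      + b (uk (k + 1)) (uk k) v + μ * (inner ℝ (IH (uk (k + 1) - u)) (IH v) : ℝ)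
      = f v + b (uk k) (uk k) v)
    (hstable : ∀ k, ‖G (uk k)‖ ≤ 2 * ν⁻¹ * F)
    (hinit : (M * Real.sqrt (2 * CI * H) / (ν * (1 - 2 * (M * F / ν ^ 2)))) * ‖G (u - uk 0)‖ < 1)
    : (∀ k, ‖G (u - uk (k + 1))‖ ≤ (M * Real.sqrt (2 * CI * H) / (ν * (1 - 2 * (M * F / ν ^ 2)))) * ‖G (u - uk k)‖ ^ 2) ∧
      Filter.Tendsto (fun k => ‖G (u - uk k)‖) Filter.atTop (nhds 0) := by
  set β : ℝ := ν * (1 - 2 * (M * F / ν ^ 2)) with hβdef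
  have hαnn : 0 ≤ M * F / ν ^ 2 := by positivity
  have hβ : 0 < β := by
    rw [hβdef]
    have : M * F / ν ^ 2 < 1 / 8 := by linarith
    nlinarith
  set C : ℝ := M * Real.sqrt (2 * CI * H) / β with hCdef
  have hCIH : 0 < CI * H := mul_pos hCI hH
  have hC : 0 < C := by
    rw [hCdef]
    have : 0 < Real.sqrt (2 * CI * H) := Real.sqrt_pos.mpr (by positivity)
    positivity
  -- error equation
  have key : ∀ k (v : V), ν * (inner ℝ (G (u - uk (k + 1))) (G v) : ℝ)
      + μ * (inner ℝ (IH (u - uk (k + 1))) (IH v) : ℝ)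
      + b (u - uk k) (u - uk k) v + b (uk k) (u - uk (k + 1)) v
      + b (u - uk (k + 1)) (uk k) v = 0 := by
    intro k v
    have h1 := hu v
    have h2 := hstep k v
    simp only [map_sub, LinearMap.sub_apply, inner_sub_left] at *
    linarith
  -- main per-step estimate
  have claim : ∀ k, ‖G (u - uk (k + 1))‖ ≤ C * ‖G (u - uk k)‖ ^ 2 := by
    intro k
    set e : V := u - uk (k + 1) with he
    set ek : V := u - uk k with hek
    set g : ℝ := ‖G e‖ with hg
    set gk : ℝ := ‖G ek‖ with hgk
    set i : ℝ := ‖IH e‖ with hi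
    have hgnn : 0 ≤ g := norm_nonneg _
    have hinn : 0 ≤ i := norm_nonneg _
    have hgknn : 0 ≤ gk := norm_nonneg _
    have hkey := key k e
    rw [hbskew (uk k) e] at hkey
    rw [real_inner_self_eq_norm_sq (G e), real_inner_self_eq_norm_sq (IH e)] at hkey
    have habs1 : |b ek ek e| ≤ M * gk * gk * Real.sqrt ‖e‖ * Real.sqrt g := hb3 ek ek e
    have habs2 : |b e (uk k) e| ≤ M * g * ‖G (uk k)‖ * g := hb2 e (uk k) e
    have hstab : ‖G (uk k)‖ ≤ 2 * ν⁻¹ * F := hstable k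
    have h4 : β * g ^ 2 + μ * i ^ 2 ≤ M * gk ^ 2 * Real.sqrt ‖e‖ * Real.sqrt g := by
      have hb2' : |b e (uk k) e| ≤ M * (2 * ν⁻¹ * F) * g ^ 2 := by
        calc |b e (uk k) e| ≤ M * g * ‖G (uk k)‖ * g := habs2
          _ ≤ M * g * (2 * ν⁻¹ * F) * g := by
              have : M * g * ‖G (uk k)‖ ≤ M * g * (2 * ν⁻¹ * F) :=
                mul_le_mul_of_nonneg_left hstab (by positivity)
              exact mul_le_mul_of_nonneg_right this hgnn
          _ = M * (2 * ν⁻¹ * F) * g ^ 2 := by ring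
      have hβg : β * g ^ 2 = ν * g ^ 2 - M * (2 * ν⁻¹ * F) * g ^ 2 := by
        rw [hβdef]; field_simp
      have hbe1 := neg_abs_le (b ek ek e)
      have hbe2 := neg_abs_le (b e (uk k) e)
      have : M * gk * gk * Real.sqrt ‖e‖ * Real.sqrt g = M * gk ^ 2 * Real.sqrt ‖e‖ * Real.sqrt g := by ring
      rw [this] at habs1
      linarith [abs_nonneg (b ek ek e)]
    -- interpolation bound
    have hnorm_e : ‖e‖ ≤ CI * H * g + i := by
      calc ‖e‖ = ‖(e - IH e) + IH e‖ := by rw [sub_add_cancel]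
        _ ≤ ‖e - IH e‖ + ‖IH e‖ := norm_add_le _ _
        _ ≤ CI * H * g + i := by have := hIH e; rw [← hi]; linarith
    obtain ⟨j, hjnn, hij⟩ : ∃ j, 0 ≤ j ∧ i = CI * H * j :=
      ⟨i / (CI * H), div_nonneg hinn hCIH.le, by field_simp⟩
    have hsqrt : Real.sqrt ‖e‖ ≤ Real.sqrt (CI * H) * Real.sqrt (g + j) := by
      have h1 : Real.sqrt ‖e‖ ≤ Real.sqrt (CI * H * (g + j)) := by
        apply Real.sqrt_le_sqrt
        rw [mul_add]; rw [hij] at hnorm_e; linarith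
      rwa [Real.sqrt_mul hCIH.le] at h1
    have hμi : β / 4 * j ^ 2 ≤ μ * i ^ 2 := by
      have h1 : β / (4 * CI ^ 2 * H ^ 2) * i ^ 2 ≤ μ * i ^ 2 :=
        mul_le_mul_of_nonneg_right hμ' (sq_nonneg i)
      have h2 : β / (4 * CI ^ 2 * H ^ 2) * i ^ 2 = β / 4 * j ^ 2 := by
        rw [hij]; field_simp
      linarith
    have h5 : β * (g ^ 2 + j ^ 2 / 4) ≤ M * gk ^ 2 * Real.sqrt (CI * H) * Real.sqrt g * Real.sqrt (g + j) := by
      have h1 : M * gk ^ 2 * Real.sqrt ‖e‖ * Real.sqrt g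
          ≤ M * gk ^ 2 * (Real.sqrt (CI * H) * Real.sqrt (g + j)) * Real.sqrt g := by
        apply mul_le_mul_of_nonneg_right _ (Real.sqrt_nonneg g)
        exact mul_le_mul_of_nonneg_left hsqrt (by positivity)
      have h2 : M * gk ^ 2 * (Real.sqrt (CI * H) * Real.sqrt (g + j)) * Real.sqrt g
          = M * gk ^ 2 * Real.sqrt (CI * H) * Real.sqrt g * Real.sqrt (g + j) := by ring
      rw [h2] at h1
      linarith
    have hSnn : 0 ≤ M * gk ^ 2 * Real.sqrt (CI * H) / β := by positivity
    have h6 : g ^ 2 + j ^ 2 / 4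
        ≤ (M * gk ^ 2 * Real.sqrt (CI * H) / β) * Real.sqrt g * Real.sqrt (g + j) := by
      rw [div_mul_eq_mul_div, div_mul_eq_mul_div, le_div_iff₀ hβ]
      calc (g ^ 2 + j ^ 2 / 4) * β = β * (g ^ 2 + j ^ 2 / 4) := mul_comm _ _
        _ ≤ M * gk ^ 2 * Real.sqrt (CI * H) * Real.sqrt g * Real.sqrt (g + j) := h5
    have hfin := aux_quad g j _ hgnn hjnn hSnn h6
    have hsplit : Real.sqrt (2 * CI * H) = Real.sqrt 2 * Real.sqrt (CI * H) := by
      rw [mul_assoc, Real.sqrt_mul (by norm_num : (0:ℝ) ≤ 2)]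
    have heq : Real.sqrt 2 * (M * gk ^ 2 * Real.sqrt (CI * H) / β) = C * gk ^ 2 := by
      rw [hCdef, hsplit]; ring
    linarith [hfin, heq.le]
  refine ⟨claim, ?_⟩
  -- convergence
  obtain ⟨q, hq0, hq1, hqd⟩ : ∃ q, 0 ≤ q ∧ q < 1 ∧ q = C * ‖G (u - uk 0)‖ :=
    ⟨_, by positivity, hinit, rfl⟩
  have hbound : ∀ k, C * ‖G (u - uk k)‖ ≤ q ^ (k + 1) := by
    intro k
    induction k with
    | zero => rw [hqd, pow_one]
    | succ n ih =>
      have h1 : C * ‖G (u - uk (n + 1))‖ ≤ (C * ‖G (u - uk n)‖) ^ 2 := by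
        have := mul_le_mul_of_nonneg_left (claim n) hC.le
        calc C * ‖G (u - uk (n + 1))‖ ≤ C * (C * ‖G (u - uk n)‖ ^ 2) := this
          _ = (C * ‖G (u - uk n)‖) ^ 2 := by ring
      calc C * ‖G (u - uk (n + 1))‖ ≤ (C * ‖G (u - uk n)‖) ^ 2 := h1
        _ ≤ (q ^ (n + 1)) ^ 2 := pow_le_pow_left₀ (by positivity) ih 2
        _ = q ^ (2 * (n + 1)) := by rw [← pow_mul]; ring_nf
        _ ≤ q ^ (n + 1 + 1) := pow_le_pow_of_le_one hq0 hq1.le (by omega)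
  have htend : Filter.Tendsto (fun k : ℕ => q ^ (k + 1) / C) Filter.atTop (nhds 0) := by
    have h1 : Filter.Tendsto (fun k : ℕ => q ^ k) Filter.atTop (nhds 0) :=
      tendsto_pow_atTop_nhds_zero_of_lt_one hq0 hq1
    have h2 : Filter.Tendsto (fun k : ℕ => q ^ (k + 1)) Filter.atTop (nhds 0) :=
      h1.comp (Filter.tendsto_add_atTop_nat 1)
    simpa using h2.div_const C
  apply squeeze_zero (fun k => norm_nonneg _) _ htend
  intro k
  rw [le_div_iff₀ hC]
  have := hbound k
  linarith
end

section
/- (One-step bound for CDA-Newton without smallness on α, key estimate in Theorem 4.2) Assume μ ≥ ν/(8 C_I² H²). Let u ∈ V be a weak NSE solution, let u_{k+1} ∈ V be a CDA-Newton step from u_k ∈ V, write e_j = u − u_j, and let A > 0 satisfy ν/(16 C_I² H²) − M⁴/(16 A² ν) − (64 M⁴/ν³) ‖G e_k‖⁴ − 64 ν α⁴ ≥ 0, where α = M ν⁻² F. Then ‖G e_{k+1}‖ ≤ √(8A/ν) ‖G e_k‖². -/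
set_option maxHeartbeats 1000000

private lemma young' (ε a b : ℝ) (hε : 0 < ε) : a * b ≤ ε * a ^ 2 + b ^ 2 / (4 * ε) := by
  have h : ε * a ^ 2 + b ^ 2 / (4 * ε) - a * b = (2 * ε * a - b) ^ 2 / (4 * ε) := by
    field_simp; ring
  nlinarith [div_nonneg (sq_nonneg (2 * ε * a - b)) (by linarith : (0:ℝ) ≤ 4 * ε)]

private lemma youngA (M k s t A ν : ℝ) (hA : 0 < A) (hν : 0 < ν) :
    M * k ^ 2 * s * t ≤ A * k ^ 4 + ν / 4 * t ^ 4 + M ^ 4 / (16 * A ^ 2 * ν) * s ^ 4 := by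
  have h1 := young' A (k ^ 2) (M * s * t) hA
  have h2 := young' (ν / 4) (t ^ 2) (M ^ 2 / (4 * A) * s ^ 2) (by linarith)
  have e1 : (M * s * t) ^ 2 / (4 * A) = t ^ 2 * (M ^ 2 / (4 * A) * s ^ 2) := by
    field_simp
  have e2 : (M ^ 2 / (4 * A) * s ^ 2) ^ 2 / (4 * (ν / 4)) = M ^ 4 / (16 * A ^ 2 * ν) * s ^ 4 := by
    field_simp; ring
  linarith

private lemma youngB (B s t ν : ℝ) (hν : 0 < ν) :
    B * s * t ^ 3 ≤ ν / 4 * t ^ 4 + 8 * B ^ 4 / ν ^ 3 * s ^ 4 := by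
  have h1 := young' (ν / 8) (t ^ 2) (B * s * t) (by linarith)
  have e1 : (B * s * t) ^ 2 / (4 * (ν / 8)) = t ^ 2 * (2 * B ^ 2 / ν * s ^ 2) := by
    field_simp; ring
  have h2 := young' (ν / 8) (t ^ 2) (2 * B ^ 2 / ν * s ^ 2) (by linarith)
  have e2 : (2 * B ^ 2 / ν * s ^ 2) ^ 2 / (4 * (ν / 8)) = 8 * B ^ 4 / ν ^ 3 * s ^ 4 := by
    field_simp; ring
  linarith

theorem cda_newton_one_step_no_smallness
    {V W : Type*} [NormedAddCommGroup V] [InnerProductSpace ℝ V]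
    [NormedAddCommGroup W] [InnerProductSpace ℝ W]
    (G : V →ₗ[ℝ] W) (b : V →ₗ[ℝ] V →ₗ[ℝ] V →ₗ[ℝ] ℝ) (f : V →ₗ[ℝ] ℝ)
    (M F ν : ℝ) (hM : 0 < M) (hF : 0 ≤ F) (hν : 0 < ν)
    (hbskew : ∀ u v : V, b u v v = 0)
    (hb1 : ∀ u w v : V, |b u w v| ≤ M * Real.sqrt ‖u‖ * Real.sqrt ‖G u‖ * ‖G w‖ * ‖G v‖)
    (hb2 : ∀ u w v : V, |b u w v| ≤ M * ‖G u‖ * ‖G w‖ * ‖G v‖)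
    (hb3 : ∀ u w v : V, |b u w v| ≤ M * ‖G u‖ * ‖G w‖ * Real.sqrt ‖v‖ * Real.sqrt ‖G v‖)
    (hf : ∀ v : V, |f v| ≤ F * ‖G v‖)
    (IH : V →ₗ[ℝ] V) (CI H μ : ℝ) (hCI : 0 < CI) (hH : 0 < H) (hμ : 0 < μ)
    (hIH : ∀ v : V, ‖v - IH v‖ ≤ CI * H * ‖G v‖)
    (u : V) (hu : ∀ v : V, ν * (inner ℝ (G u) (G v) : ℝ) + b u u v = f v)
    (hμ' : μ ≥ ν / (8 * CI ^ 2 * H ^ 2))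
    (uk uk1 : V)
    (hstep : ∀ v : V, ν * (inner ℝ (G uk1) (G v) : ℝ) + b uk uk1 v + b uk1 uk v
      + μ * (inner ℝ (IH (uk1 - u)) (IH v) : ℝ) = f v + b uk uk v)
    (A : ℝ) (hA : 0 < A)
    (hcond : ν / (16 * CI ^ 2 * H ^ 2) - M ^ 4 / (16 * A ^ 2 * ν)
      - (64 * M ^ 4 / ν ^ 3) * ‖G (u - uk)‖ ^ 4 - 64 * ν * (M * F / ν ^ 2) ^ 4 ≥ 0)
    : ‖G (u - uk1)‖ ≤ Real.sqrt (8 * A / ν) * ‖G (u - uk)‖ ^ 2 := by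
  set e : V := u - uk1 with he
  set ek : V := u - uk with hek
  -- error equation
  have key : ∀ v : V, ν * (inner ℝ (G e) (G v) : ℝ) + b ek ek v + b uk e v + b e uk v
      + μ * (inner ℝ (IH e) (IH v) : ℝ) = 0 := by
    intro v
    have h1 := hu v
    have h2 := hstep v
    simp only [he, hek, map_sub, LinearMap.sub_apply, inner_sub_left] at *
    linarith
  -- a priori bound on ‖G u‖
  have hGu : ‖G u‖ ≤ F / ν := by
    have h1 := hu u
    rw [hbskew, real_inner_self_eq_norm_sq] at h1
    have h2 := (abs_le.mp (hf u)).2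
    rw [le_div_iff₀ hν]
    rcases (norm_nonneg (G u)).eq_or_lt with hq | hq
    · rw [← hq]; simpa using hF
    · exact le_of_mul_le_mul_right (by nlinarith) hq
  -- energy identity tested with v = e
  have energy : ν * ‖G e‖ ^ 2 + μ * ‖IH e‖ ^ 2 = -(b ek ek e) - b e u e + b e ek e := by
    have h := key e
    rw [hbskew uk e, real_inner_self_eq_norm_sq, real_inner_self_eq_norm_sq] at h
    have huk : uk = u - ek := by rw [hek]; abel
    have hsplit : b e uk e = b e u e - b e ek e := by
      rw [huk]; simp [map_sub, LinearMap.sub_apply]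
    rw [hsplit] at h
    linarith
  -- triangle inequality for interpolation
  have htri : ‖e‖ ≤ ‖e - IH e‖ + ‖IH e‖ := by
    calc ‖e‖ = ‖e - IH e + IH e‖ := by rw [sub_add_cancel]
      _ ≤ ‖e - IH e‖ + ‖IH e‖ := norm_add_le _ _
  have hIHe := hIH e
  -- introduce square-root variables
  obtain ⟨s, hs0, hne⟩ : ∃ s : ℝ, 0 ≤ s ∧ ‖e‖ = s ^ 2 :=
    ⟨Real.sqrt ‖e‖, Real.sqrt_nonneg _, (Real.sq_sqrt (norm_nonneg _)).symm⟩
  obtain ⟨t, ht0, hGe⟩ : ∃ t : ℝ, 0 ≤ t ∧ ‖G e‖ = t ^ 2 :=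
    ⟨Real.sqrt ‖G e‖, Real.sqrt_nonneg _, (Real.sq_sqrt (norm_nonneg _)).symm⟩
  have hT1 := hb3 ek ek e
  have hT2 := hb1 e u e
  have hT3 := hb1 e ek e
  rw [hne, hGe] at hT1 hT2 hT3
  rw [Real.sqrt_sq hs0, Real.sqrt_sq ht0] at hT1 hT2 hT3
  rw [hGe] at energy hIHe
  rw [hne] at htri
  rw [hGe]
  set k : ℝ := ‖G ek‖
  set y : ℝ := ‖IH e‖
  -- upper bounds for the trilinear terms
  have q1 : -(b ek ek e) ≤ M * k ^ 2 * s * t := by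
    have h2 : M * k * k * s * t = M * k ^ 2 * s * t := by ring
    linarith [neg_le_abs (b ek ek e), hT1]
  have q2 : -(b e u e) ≤ (M * F / ν) * s * t ^ 3 := by
    have h0 : (0:ℝ) ≤ M * s * t * t ^ 2 := by positivity
    have h1 := mul_le_mul_of_nonneg_left hGu h0
    have h2 : M * s * t * t ^ 2 * (F / ν) = M * F / ν * s * t ^ 3 := by ring
    have h3 : M * s * t * t ^ 2 * ‖G u‖ = M * s * t * ‖G u‖ * t ^ 2 := by ring
    linarith [neg_le_abs (b e u e), hT2, h1]
  have q3 : b e ek e ≤ (M * k) * s * t ^ 3 := by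
    have h2 : M * s * t * k * t ^ 2 = M * k * s * t ^ 3 := by ring
    linarith [le_abs_self (b e ek e), hT3]
  -- Young inequalities
  have Y1 := youngA M k s t A ν hA hν
  have Y2 := youngB (M * F / ν) s t ν hν
  have Y3 := youngB (M * k) s t ν hν
  -- interpolation: s^2 ≤ CI*H*t^2 + y, hence s^4 ≤ 2 CI^2 H^2 t^4 + 2 y^2
  have hinterp : s ^ 2 ≤ CI * H * t ^ 2 + y := by linarith
  have S : s ^ 4 ≤ 2 * (CI ^ 2 * H ^ 2) * t ^ 4 + 2 * y ^ 2 := by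
    have hP : 0 ≤ CI * H * t ^ 2 + y := le_trans (sq_nonneg s) hinterp
    have h1 : s ^ 2 * s ^ 2 ≤ (CI * H * t ^ 2 + y) * (CI * H * t ^ 2 + y) :=
      mul_le_mul hinterp hinterp (sq_nonneg s) hP
    nlinarith [sq_nonneg (CI * H * t ^ 2 - y)]
  -- coefficient bound from hcond
  have C : M ^ 4 / (16 * A ^ 2 * ν) + 8 * (M * F / ν) ^ 4 / ν ^ 3 + 8 * (M * k) ^ 4 / ν ^ 3
      ≤ ν / (16 * CI ^ 2 * H ^ 2) := by
    have d1 : 64 * ν * (M * F / ν ^ 2) ^ 4 - 8 * (M * F / ν) ^ 4 / ν ^ 3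
        = 56 * M ^ 4 * F ^ 4 / ν ^ 7 := by field_simp; ring
    have d2 : (64 * M ^ 4 / ν ^ 3) * k ^ 4 - 8 * (M * k) ^ 4 / ν ^ 3
        = 56 * M ^ 4 * k ^ 4 / ν ^ 3 := by field_simp; ring
    have p1 : (0:ℝ) ≤ 56 * M ^ 4 * F ^ 4 / ν ^ 7 :=
      div_nonneg (by positivity) (pow_nonneg hν.le 7)
    have p2 : (0:ℝ) ≤ 56 * M ^ 4 * k ^ 4 / ν ^ 3 :=
      div_nonneg (by positivity) (pow_nonneg hν.le 3)
    linarith [hcond]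
  have hβ : (M ^ 4 / (16 * A ^ 2 * ν) + 8 * (M * F / ν) ^ 4 / ν ^ 3
        + 8 * (M * k) ^ 4 / ν ^ 3) * s ^ 4
      ≤ ν / (16 * CI ^ 2 * H ^ 2) * s ^ 4 :=
    mul_le_mul_of_nonneg_right C (by positivity)
  have hS' : ν / (16 * CI ^ 2 * H ^ 2) * s ^ 4
      ≤ ν / (16 * CI ^ 2 * H ^ 2) * (2 * (CI ^ 2 * H ^ 2) * t ^ 4 + 2 * y ^ 2) :=
    mul_le_mul_of_nonneg_left S
      (div_nonneg hν.le (by positivity))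
  have hEq : ν / (16 * CI ^ 2 * H ^ 2) * (2 * (CI ^ 2 * H ^ 2) * t ^ 4 + 2 * y ^ 2)
      = ν / 8 * t ^ 4 + ν / (8 * CI ^ 2 * H ^ 2) * y ^ 2 := by
    field_simp
    ring
  have hμy : ν / (8 * CI ^ 2 * H ^ 2) * y ^ 2 ≤ μ * y ^ 2 :=
    mul_le_mul_of_nonneg_right hμ' (sq_nonneg y)
  -- conclude ν/8 t^4 ≤ A k^4
  have hfin : ν / 8 * t ^ 4 ≤ A * k ^ 4 := by
    have eqA : ν * (t ^ 2) ^ 2 = ν * t ^ 4 := by ring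
    have eqB : (M ^ 4 / (16 * A ^ 2 * ν) + 8 * (M * F / ν) ^ 4 / ν ^ 3
        + 8 * (M * k) ^ 4 / ν ^ 3) * s ^ 4
        = M ^ 4 / (16 * A ^ 2 * ν) * s ^ 4 + 8 * (M * F / ν) ^ 4 / ν ^ 3 * s ^ 4
          + 8 * (M * k) ^ 4 / ν ^ 3 * s ^ 4 := by ring
    linarith [energy, q1, q2, q3, Y1, Y2, Y3, hβ, hS', hEq, hμy]
  -- translate back
  have hx2 : t ^ 2 * t ^ 2 ≤ 8 * A / ν * k ^ 4 := by
    rw [div_mul_eq_mul_div, le_div_iff₀ hν]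
    linarith
  have h8 : (0:ℝ) ≤ 8 * A / ν := div_nonneg (by linarith) hν.le
  calc t ^ 2 = Real.sqrt ((t ^ 2) * (t ^ 2)) := by
        rw [← pow_two, Real.sqrt_sq (sq_nonneg t)]
    _ ≤ Real.sqrt (8 * A / ν * k ^ 4) := Real.sqrt_le_sqrt hx2
    _ = Real.sqrt (8 * A / ν) * Real.sqrt (k ^ 4) := Real.sqrt_mul h8 _
    _ = Real.sqrt (8 * A / ν) * k ^ 2 := by
        rw [show k ^ 4 = (k ^ 2) ^ 2 by ring, Real.sqrt_sq (by positivity)]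
end

section
/- (Quadratic convergence of CDA-Newton without smallness on α, Theorem 4.2) Assume μ ≥ ν/(8 C_I² H²). Let u ∈ V be a weak NSE solution, let (u_k)_{k≥0} be a sequence in V such that for every k, u_{k+1} is a CDA-Newton step from u_k, and let A > 0 satisfy both √(8A/ν) ‖G(u − u_0)‖ < 1 and ν/(16 C_I² H²) − M⁴/(16 A² ν) − (64 M⁴/ν³) ‖G(u − u_0)‖⁴ − 64 ν α⁴ ≥ 0, where α = M ν⁻² F. Then for every k, ‖G(u − u_{k+1})‖ ≤ √(8A/ν) ‖G(u − u_k)‖², and ‖G(u − u_k)‖ → 0 as k → ∞. -/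
private lemma cda_young1 {x t ν : ℝ} (hx : 0 ≤ x) (ht : 0 ≤ t) (hν : 0 < ν) :
    x * t^3 ≤ ν/4 * t^4 + 64/ν^3 * x^4 := by
  have key : ν^4*t^4 + 27*x^4 - 4*ν^3*t^3*x
      = (ν*t - 3*x)^2 * ((ν*t)^2 + 2*(ν*t)*x + 3*x^2) := by ring
  have hut : 0 ≤ ν*t := mul_nonneg hν.le ht
  have hq : 0 ≤ (ν*t)^2 + 2*(ν*t)*x + 3*x^2 := by
    nlinarith [mul_nonneg hut hx, sq_nonneg (ν*t), sq_nonneg x]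
  have hnn : 0 ≤ (ν*t - 3*x)^2 * ((ν*t)^2 + 2*(ν*t)*x + 3*x^2) := mul_nonneg (sq_nonneg _) hq
  have h2 : 4*ν^3*(x*t^3) ≤ 4*ν^3*(ν/4*t^4 + 64/ν^3*x^4) := by
    have e : 4*ν^3*(ν/4*t^4 + 64/ν^3*x^4) = ν^4*t^4 + 256*x^4 := by
      field_simp; ring
    rw [e]
    nlinarith [pow_nonneg hx 4]
  exact le_of_mul_le_mul_left h2 (by positivity)

private lemma cda_young2 {MM A ν E s t : ℝ} (hA : 0 < A) (hν : 0 < ν) :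
    MM*E^2*s*t ≤ A*E^4 + MM^4/(16*A^2*ν)*s^4 + ν/4*t^4 := by
  have h2 : 16*A^2*ν*(MM*E^2*s*t) ≤ 16*A^2*ν*(A*E^4 + MM^4/(16*A^2*ν)*s^4 + ν/4*t^4) := by
    have e : 16*A^2*ν*(A*E^4 + MM^4/(16*A^2*ν)*s^4 + ν/4*t^4)
        = 16*A^3*ν*E^4 + MM^4*s^4 + 4*A^2*ν^2*t^4 := by
      field_simp; ring
    rw [e]
    nlinarith [mul_nonneg (mul_nonneg (by positivity : (0:ℝ) ≤ 4*A) hν.le)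
        (sq_nonneg (2*A*E^2 - MM*s*t)), sq_nonneg (MM^2*s^2 - 2*A*ν*t^2)]
  exact le_of_mul_le_mul_left h2 (by positivity)

set_option maxHeartbeats 1000000 in
private lemma cda_numeric {ν A MM CI H μ F E0 s t m E U : ℝ}
    (hν : 0 < ν) (hA : 0 < A) (hM : 0 < MM) (hCI : 0 < CI) (hH : 0 < H)
    (hμ' : μ ≥ ν / (8 * CI ^ 2 * H ^ 2))
    (hcond : ν / (16 * CI ^ 2 * H ^ 2) - MM ^ 4 / (16 * A ^ 2 * ν)
      - (64 * MM ^ 4 / ν ^ 3) * E0 ^ 4 - 64 * ν * (MM * F / ν ^ 2) ^ 4 ≥ 0)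
    (hs : 0 ≤ s) (ht : 0 ≤ t) (hE : 0 ≤ E) (hU : 0 ≤ U)
    (hUF : U ≤ F/ν) (hEE0 : E ≤ E0)
    (hinterp : s^2 ≤ CI*H*t^2 + m)
    (hmain : ν*t^4 + μ*m^2 ≤ MM*U*s*t^3 + MM*E*s*t^3 + MM*E^2*s*t) :
    t^4 ≤ 8*A/ν*E^4 := by
  have h1 : MM*U*s*t^3 ≤ ν/4*t^4 + 64/ν^3*(MM*U*s)^4 :=
    cda_young1 (by positivity) ht hν
  have h2 : MM*E*s*t^3 ≤ ν/4*t^4 + 64/ν^3*(MM*E*s)^4 :=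
    cda_young1 (by positivity) ht hν
  have h3 : MM*E^2*s*t ≤ A*E^4 + MM^4/(16*A^2*ν)*s^4 + ν/4*t^4 :=
    cda_young2 hA hν
  have hU4 : 64/ν^3*(MM*U*s)^4 ≤ 64*ν*(MM*F/ν^2)^4 * s^4 := by
    have e1 : 64/ν^3*(MM*U*s)^4 = 64*MM^4/ν^3 * U^4 * s^4 := by ring
    have e2 : 64*ν*(MM*F/ν^2)^4 * s^4 = 64*MM^4/ν^3 * (F/ν)^4 * s^4 := by
      field_simp
    rw [e1, e2]
    have h4 : U^4 ≤ (F/ν)^4 := pow_le_pow_left₀ hU hUF 4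
    gcongr
  have hE4 : 64/ν^3*(MM*E*s)^4 ≤ 64*MM^4/ν^3 * E0^4 * s^4 := by
    have e1 : 64/ν^3*(MM*E*s)^4 = 64*MM^4/ν^3 * E^4 * s^4 := by ring
    rw [e1]
    have h4 : E^4 ≤ E0^4 := pow_le_pow_left₀ hE hEE0 4
    gcongr
  have hs4 : s^4 ≤ 2*CI^2*H^2*t^4 + 2*m^2 := by
    have h0 : (s^2)^2 ≤ (CI*H*t^2 + m)^2 :=
      pow_le_pow_left₀ (sq_nonneg s) hinterp 2
    linarith [h0, sq_nonneg (CI*H*t^2 - m)]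
  have hKnn : (0:ℝ) ≤ MM^4/(16*A^2*ν) + 64*MM^4/ν^3*E0^4 + 64*ν*(MM*F/ν^2)^4 := by
    have hE04 : (0:ℝ) ≤ E0^4 := by positivity
    have : (0:ℝ) ≤ 64*MM^4/ν^3*E0^4 := by positivity
    positivity
  have hK : MM^4/(16*A^2*ν) + 64*MM^4/ν^3*E0^4 + 64*ν*(MM*F/ν^2)^4 ≤ ν/(16*CI^2*H^2) := by
    linarith
  have hKc : 2*(MM^4/(16*A^2*ν) + 64*MM^4/ν^3*E0^4 + 64*ν*(MM*F/ν^2)^4)*(CI^2*H^2) ≤ ν/8 := by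
    have hp : (0:ℝ) < CI^2*H^2 := by positivity
    have h5 := mul_le_mul_of_nonneg_right hK hp.le
    have e : ν/(16*CI^2*H^2)*(CI^2*H^2) = ν/16 := by field_simp
    linarith
  have hKμ : 2*(MM^4/(16*A^2*ν) + 64*MM^4/ν^3*E0^4 + 64*ν*(MM*F/ν^2)^4) ≤ μ := by
    have e : 2*(ν/(16*CI^2*H^2)) = ν/(8*CI^2*H^2) := by ring
    linarith
  have hKs : (MM^4/(16*A^2*ν) + 64*MM^4/ν^3*E0^4 + 64*ν*(MM*F/ν^2)^4)*s^4
      ≤ ν/8*t^4 + μ*m^2 := by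
    have a1 := mul_le_mul_of_nonneg_left hs4 hKnn
    have a2 := mul_le_mul_of_nonneg_right hKc (pow_nonneg ht 4)
    have a3 := mul_le_mul_of_nonneg_right hKμ (sq_nonneg m)
    linarith
  have hfinal : ν/8*t^4 ≤ A*E^4 := by linarith
  have h6 : t^4 ≤ 8*A*E^4/ν := by rw [le_div_iff₀ hν]; linarith
  calc t^4 ≤ 8*A*E^4/ν := h6
    _ = 8*A/ν*E^4 := by ring

set_option maxHeartbeats 4000000 in
theorem cda_newton_convergence_no_smallness
    {V W : Type*} [NormedAddCommGroup V] [InnerProductSpace ℝ V]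
    [NormedAddCommGroup W] [InnerProductSpace ℝ W]
    (G : V →ₗ[ℝ] W) (b : V →ₗ[ℝ] V →ₗ[ℝ] V →ₗ[ℝ] ℝ) (f : V →ₗ[ℝ] ℝ)
    (M F ν : ℝ) (hM : 0 < M) (hF : 0 ≤ F) (hν : 0 < ν)
    (hbskew : ∀ u v : V, b u v v = 0)
    (hb1 : ∀ u w v : V, |b u w v| ≤ M * Real.sqrt ‖u‖ * Real.sqrt ‖G u‖ * ‖G w‖ * ‖G v‖)
    (hb2 : ∀ u w v : V, |b u w v| ≤ M * ‖G u‖ * ‖G w‖ * ‖G v‖)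
    (hb3 : ∀ u w v : V, |b u w v| ≤ M * ‖G u‖ * ‖G w‖ * Real.sqrt ‖v‖ * Real.sqrt ‖G v‖)
    (hf : ∀ v : V, |f v| ≤ F * ‖G v‖)
    (IH : V →ₗ[ℝ] V) (CI H μ : ℝ) (hCI : 0 < CI) (hH : 0 < H) (hμ : 0 < μ)
    (hIH : ∀ v : V, ‖v - IH v‖ ≤ CI * H * ‖G v‖)
    (u : V) (hu : ∀ v : V, ν * (inner ℝ (G u) (G v) : ℝ) + b u u v = f v)
    (hμ' : μ ≥ ν / (8 * CI ^ 2 * H ^ 2))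
    (uk : ℕ → V)
    (hstep : ∀ k, ∀ v : V, ν * (inner ℝ (G (uk (k + 1))) (G v) : ℝ) + b (uk k) (uk (k + 1)) v
      + b (uk (k + 1)) (uk k) v + μ * (inner ℝ (IH (uk (k + 1) - u)) (IH v) : ℝ)
      = f v + b (uk k) (uk k) v)
    (A : ℝ) (hA : 0 < A)
    (hinit : Real.sqrt (8 * A / ν) * ‖G (u - uk 0)‖ < 1)
    (hcond : ν / (16 * CI ^ 2 * H ^ 2) - M ^ 4 / (16 * A ^ 2 * ν)
      - (64 * M ^ 4 / ν ^ 3) * ‖G (u - uk 0)‖ ^ 4 - 64 * ν * (M * F / ν ^ 2) ^ 4 ≥ 0)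
    : (∀ k, ‖G (u - uk (k + 1))‖ ≤ Real.sqrt (8 * A / ν) * ‖G (u - uk k)‖ ^ 2) ∧
      Filter.Tendsto (fun k => ‖G (u - uk k)‖) Filter.atTop (nhds 0) := by
  -- the a priori bound on ‖G u‖
  have hGu : ‖G u‖ ≤ F / ν := by
    have h0 := hu u
    rw [hbskew u u, real_inner_self_eq_norm_sq] at h0
    have h8 : ν * ‖G u‖^2 ≤ F * ‖G u‖ := by
      have := hf u
      have := le_abs_self (f u)
      linarith
    rcases (norm_nonneg (G u)).eq_or_lt with h | h
    · rw [← h]; positivity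
    · rw [le_div_iff₀ hν]
      nlinarith [h8, h]
  -- the conditional one-step quadratic bound
  have hstepbound : ∀ k, ‖G (u - uk k)‖ ≤ ‖G (u - uk 0)‖ →
      ‖G (u - uk (k+1))‖ ≤ Real.sqrt (8 * A / ν) * ‖G (u - uk k)‖ ^ 2 := by
    intro k hk
    -- energy identity
    have hiden : ν * ‖G (u - uk (k+1))‖^2 + μ * ‖IH (u - uk (k+1))‖^2
        = -(b (u - uk (k+1)) u (u - uk (k+1)))
          + b (u - uk (k+1)) (u - uk k) (u - uk (k+1))
          - b (u - uk k) (u - uk k) (u - uk (k+1)) := by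
      have h1 := hu (u - uk (k+1))
      have h2 := hstep k (u - uk (k+1))
      have s1 := hbskew u (u - uk (k+1))
      have s2 := hbskew (u - uk k) (u - uk (k+1))
      have n1 : ‖G (u - uk (k+1))‖^2 = (inner ℝ (G (u - uk (k+1))) (G (u - uk (k+1))) : ℝ) :=
        (real_inner_self_eq_norm_sq _).symm
      have n2 : ‖IH (u - uk (k+1))‖^2 = (inner ℝ (IH (u - uk (k+1))) (IH (u - uk (k+1))) : ℝ) :=
        (real_inner_self_eq_norm_sq _).symm
      rw [n1, n2]
      simp only [map_sub, LinearMap.sub_apply, inner_sub_left, inner_sub_right] at h1 h2 s1 s2 ⊢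
      linear_combination h1 - h2 + s2 - s1
    have hmain' : ν * ‖G (u - uk (k+1))‖^2 + μ * ‖IH (u - uk (k+1))‖^2
        ≤ M * ‖G u‖ * Real.sqrt ‖u - uk (k+1)‖ * Real.sqrt ‖G (u - uk (k+1))‖ * ‖G (u - uk (k+1))‖
          + M * ‖G (u - uk k)‖ * Real.sqrt ‖u - uk (k+1)‖ * Real.sqrt ‖G (u - uk (k+1))‖
              * ‖G (u - uk (k+1))‖
          + M * ‖G (u - uk k)‖^2 * Real.sqrt ‖u - uk (k+1)‖ * Real.sqrt ‖G (u - uk (k+1))‖ := by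
      have b1 := hb1 (u - uk (k+1)) u (u - uk (k+1))
      have b2 := hb1 (u - uk (k+1)) (u - uk k) (u - uk (k+1))
      have b3 := hb3 (u - uk k) (u - uk k) (u - uk (k+1))
      have a1 := neg_abs_le (b (u - uk (k+1)) u (u - uk (k+1)))
      have a2 := le_abs_self (b (u - uk (k+1)) (u - uk k) (u - uk (k+1)))
      have a3 := neg_abs_le (b (u - uk k) (u - uk k) (u - uk (k+1)))
      rw [hiden]
      nlinarith [b1, b2, b3, a1, a2, a3]
    -- square root substitutions
    have e2 : (Real.sqrt ‖G (u - uk (k+1))‖)^2 = ‖G (u - uk (k+1))‖ :=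
      Real.sq_sqrt (norm_nonneg _)
    have e2' : (Real.sqrt ‖u - uk (k+1)‖)^2 = ‖u - uk (k+1)‖ :=
      Real.sq_sqrt (norm_nonneg _)
    have hinterp : (Real.sqrt ‖u - uk (k+1)‖)^2
        ≤ CI * H * (Real.sqrt ‖G (u - uk (k+1))‖)^2 + ‖IH (u - uk (k+1))‖ := by
      rw [e2, e2']
      calc ‖u - uk (k+1)‖
          = ‖(u - uk (k+1) - IH (u - uk (k+1))) + IH (u - uk (k+1))‖ := by
            rw [sub_add_cancel]
        _ ≤ ‖u - uk (k+1) - IH (u - uk (k+1))‖ + ‖IH (u - uk (k+1))‖ := norm_add_le _ _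
        _ ≤ CI * H * ‖G (u - uk (k+1))‖ + ‖IH (u - uk (k+1))‖ := by
            linarith [hIH (u - uk (k+1))]
    have hmain : ν * (Real.sqrt ‖G (u - uk (k+1))‖)^4 + μ * ‖IH (u - uk (k+1))‖^2
        ≤ M * ‖G u‖ * Real.sqrt ‖u - uk (k+1)‖ * (Real.sqrt ‖G (u - uk (k+1))‖)^3
          + M * ‖G (u - uk k)‖ * Real.sqrt ‖u - uk (k+1)‖ * (Real.sqrt ‖G (u - uk (k+1))‖)^3
          + M * ‖G (u - uk k)‖^2 * Real.sqrt ‖u - uk (k+1)‖ * Real.sqrt ‖G (u - uk (k+1))‖ := by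
      have e4 : (Real.sqrt ‖G (u - uk (k+1))‖)^4 = ‖G (u - uk (k+1))‖^2 := by
        rw [show (Real.sqrt ‖G (u - uk (k+1))‖)^4
            = ((Real.sqrt ‖G (u - uk (k+1))‖)^2)^2 by ring, e2]
      have e3 : (Real.sqrt ‖G (u - uk (k+1))‖)^3
          = Real.sqrt ‖G (u - uk (k+1))‖ * ‖G (u - uk (k+1))‖ := by
        rw [show (Real.sqrt ‖G (u - uk (k+1))‖)^3
            = Real.sqrt ‖G (u - uk (k+1))‖ * (Real.sqrt ‖G (u - uk (k+1))‖)^2 by ring, e2]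
      rw [e4, e3]
      nlinarith [hmain']
    have hnum := cda_numeric (A := A) (MM := M) hν hA hM hCI hH hμ' hcond
      (Real.sqrt_nonneg ‖u - uk (k+1)‖) (Real.sqrt_nonneg ‖G (u - uk (k+1))‖)
      (norm_nonneg (G (u - uk k))) (norm_nonneg (G u)) hGu hk hinterp hmain
    have e4 : (Real.sqrt ‖G (u - uk (k+1))‖)^4 = ‖G (u - uk (k+1))‖^2 := by
      rw [show (Real.sqrt ‖G (u - uk (k+1))‖)^4
          = ((Real.sqrt ‖G (u - uk (k+1))‖)^2)^2 by ring, e2]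
    rw [e4] at hnum
    calc ‖G (u - uk (k+1))‖
        = Real.sqrt (‖G (u - uk (k+1))‖^2) := (Real.sqrt_sq (norm_nonneg _)).symm
      _ ≤ Real.sqrt (8*A/ν * ‖G (u - uk k)‖^4) := Real.sqrt_le_sqrt hnum
      _ = Real.sqrt (8*A/ν) * Real.sqrt (‖G (u - uk k)‖^4) := Real.sqrt_mul (by positivity) _
      _ = Real.sqrt (8*A/ν) * ‖G (u - uk k)‖^2 := by
          rw [show ‖G (u - uk k)‖^4 = (‖G (u - uk k)‖^2)^2 by ring,
            Real.sqrt_sq (sq_nonneg _)]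
  -- monotone bound by the initial error
  have hr : 0 ≤ Real.sqrt (8 * A / ν) := Real.sqrt_nonneg _
  have hmono : ∀ k, ‖G (u - uk k)‖ ≤ ‖G (u - uk 0)‖ := by
    intro k
    induction k with
    | zero => exact le_refl _
    | succ n ih =>
      have hc := hstepbound n ih
      have h_a : 0 ≤ (Real.sqrt (8*A/ν) * ‖G (u - uk n)‖) * (‖G (u - uk 0)‖ - ‖G (u - uk n)‖) :=
        mul_nonneg (mul_nonneg hr (norm_nonneg _)) (sub_nonneg.2 ih)
      have h_b : 0 ≤ (1 - Real.sqrt (8*A/ν) * ‖G (u - uk 0)‖) * ‖G (u - uk n)‖ :=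
        mul_nonneg (by linarith) (norm_nonneg _)
      nlinarith [hc, h_a, h_b, ih]
  refine ⟨fun k => hstepbound k (hmono k), ?_⟩
  -- geometric decay
  have hq0 : 0 ≤ Real.sqrt (8*A/ν) * ‖G (u - uk 0)‖ := mul_nonneg hr (norm_nonneg _)
  have hgeo : ∀ k, ‖G (u - uk k)‖ ≤ (Real.sqrt (8*A/ν) * ‖G (u - uk 0)‖)^k * ‖G (u - uk 0)‖ := by
    intro k
    induction k with
    | zero => simp
    | succ n ih =>
      have hc := hstepbound n (hmono n)
      have h_a : 0 ≤ (Real.sqrt (8*A/ν) * ‖G (u - uk n)‖) * (‖G (u - uk 0)‖ - ‖G (u - uk n)‖) :=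
        mul_nonneg (mul_nonneg hr (norm_nonneg _)) (sub_nonneg.2 (hmono n))
      have h_c := mul_le_mul_of_nonneg_left ih hq0
      have e : (Real.sqrt (8*A/ν) * ‖G (u - uk 0)‖)^(n+1)
          = (Real.sqrt (8*A/ν) * ‖G (u - uk 0)‖) * (Real.sqrt (8*A/ν) * ‖G (u - uk 0)‖)^n := by
        ring
      rw [e]
      nlinarith [hc, h_a, h_c]
  have htend : Filter.Tendsto
      (fun k => (Real.sqrt (8*A/ν) * ‖G (u - uk 0)‖)^k * ‖G (u - uk 0)‖)
      Filter.atTop (nhds 0) := by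
    have := (tendsto_pow_atTop_nhds_zero_of_lt_one hq0 hinit).mul_const ‖G (u - uk 0)‖
    simpa using this
  exact squeeze_zero (fun k => norm_nonneg _) hgeo htend
end
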